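/- arXiv:2405.12763 — 5 statements merged into one kernel-verified Lean document; each statement's English description precedes it below -/
import Mathlib

section
/- Let S be a non-negatively graded ring which is graded-commutative. Then the following are equivalent: (1) S is Noetherian; (2) the even subring S^ev = ⊕_{n≥0} S^{2n} is Noetherian and S is finitely generated as a module over S^ev. -/
open Submodule in
private lemma aux_fg_subset {R M : Type*} [Semiring R] [AddCommMonoid M] [Module R M]
    {T : Set M} (h : (Submodule.span R T).FG) :
    ∃ T' : Finset M, ↑T' ⊆ T ∧ Submodule.span R (↑T' : Set M) = Submodule.span R T := by
  classical
  have hc := (Submodule.fg_iff_compact _).mp h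
  rw [CompleteLattice.isCompactElement_iff_exists_le_iSup_of_le_iSup] at hc
  obtain ⟨t, ht⟩ := hc T (fun x : T => Submodule.span R {(x : M)}) (by
    rw [Submodule.span_eq_iSup_of_singleton_spans T, iSup_subtype'])
  have hsub : ↑(t.image (fun x : T => (x : M))) ⊆ T := by
    intro x hx
    rw [Finset.coe_image] at hx
    obtain ⟨y, -, rfl⟩ := hx
    exact y.2
  refine ⟨t.image (fun x : T => (x : M)), hsub,
    le_antisymm (Submodule.span_mono hsub) (le_trans ht ?_)⟩
  rw [Finset.sup_le_iff]
  intro x hx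
  rw [Submodule.span_le, Set.singleton_subset_iff]
  exact Submodule.subset_span (Finset.mem_coe.mpr (Finset.mem_image_of_mem _ hx))

private noncomputable def evenProj {S : Type*} [Ring S] (𝒜 : ℕ → AddSubgroup S)
    [GradedRing 𝒜] : S →+ S :=
  (DirectSum.toAddMonoid (fun n => if Even n then (𝒜 n).subtype else 0)).comp
    (DirectSum.decomposeAddEquiv 𝒜).toAddMonoidHom

private lemma evenProj_of_mem {S : Type*} [Ring S] (𝒜 : ℕ → AddSubgroup S) [GradedRing 𝒜]
    {n : ℕ} {a : S} (ha : a ∈ 𝒜 n) :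
    evenProj 𝒜 a = if Even n then a else 0 := by
  classical
  unfold evenProj
  simp only [AddMonoidHom.comp_apply, AddEquiv.coe_toAddMonoidHom,
    DirectSum.decomposeAddEquiv_apply]
  rw [DirectSum.decompose_of_mem 𝒜 ha, DirectSum.toAddMonoid_of]
  split <;> simp

/-- Let `S` be a non-negatively graded ring which is graded-commutative
(for homogeneous `a ∈ Sᵐ`, `b ∈ Sⁿ` one has `a * b = (-1)^(m*n) * (b * a)`).
Let `Sev` be the even subring `⊕_{n ≥ 0} S^{2n}`.  Then `S` is Noetherian if and only if
`Sev` is Noetherian and `S` is finitely generated as a module over `Sev`. -/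
theorem stmt_0 {S : Type*} [Ring S] (𝒜 : ℕ → AddSubgroup S) [GradedRing 𝒜]
    (hcomm : ∀ (m n : ℕ) (a b : S), a ∈ 𝒜 m → b ∈ 𝒜 n →
      a * b = (-1 : S) ^ (m * n) * (b * a))
    (Sev : Subring S)
    (hSev : (Sev : Set S) = ((⨆ n : ℕ, 𝒜 (2 * n) : AddSubgroup S) : Set S)) :
    IsNoetherianRing S ↔ IsNoetherianRing Sev ∧ Module.Finite Sev S := by
  classical
  have hmemSev : ∀ {n : ℕ} {a : S}, Even n → a ∈ 𝒜 n → a ∈ Sev := by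
    intro n a hn ha
    obtain ⟨k, hk⟩ := hn
    have h2k : a ∈ 𝒜 (2 * k) := by rwa [two_mul, ← hk]
    have : a ∈ (⨆ n : ℕ, 𝒜 (2 * n) : AddSubgroup S) :=
      (le_iSup (fun n : ℕ => 𝒜 (2 * n)) k) h2k
    rwa [← SetLike.mem_coe, hSev]
  have hSevSup : ∀ {a : S}, a ∈ Sev → a ∈ (⨆ n : ℕ, 𝒜 (2 * n) : AddSubgroup S) := by
    intro a ha
    rwa [← SetLike.mem_coe, ← hSev]
  have hEP_mem : ∀ a : S, evenProj 𝒜 a ∈ Sev := by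
    refine DirectSum.Decomposition.inductionOn 𝒜 ?_ ?_ ?_
    · rw [map_zero]; exact Sev.zero_mem
    · intro i m
      rw [evenProj_of_mem 𝒜 m.2]
      split
      · exact hmemSev ‹Even i› m.2
      · exact Sev.zero_mem
    · intro x y hx hy
      rw [map_add]; exact Sev.add_mem hx hy
  have hEP_id : ∀ a : S, a ∈ Sev → evenProj 𝒜 a = a := by
    intro a ha
    refine AddSubgroup.iSup_induction (C := fun x => evenProj 𝒜 x = x) _ (hSevSup ha) ?_ ?_ ?_
    · intro k x hx
      rw [evenProj_of_mem 𝒜 hx, if_pos ⟨k, two_mul k⟩]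
    · exact map_zero _
    · intro x y hx hy
      rw [map_add, hx, hy]
  have hEP_mul : ∀ x ∈ Sev, ∀ s : S, evenProj 𝒜 (s * x) = evenProj 𝒜 s * x := by
    intro x hx
    refine AddSubgroup.iSup_induction
      (C := fun x => ∀ s : S, evenProj 𝒜 (s * x) = evenProj 𝒜 s * x) _ (hSevSup hx) ?_ ?_ ?_
    · intro k x hxk
      refine DirectSum.Decomposition.inductionOn 𝒜 ?_ ?_ ?_
      · rw [zero_mul, map_zero, zero_mul]
      · intro m b
        have hmul : (b : S) * x ∈ 𝒜 (m + 2 * k) := SetLike.mul_mem_graded b.2 hxk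
        have hpar : Even (m + 2 * k) ↔ Even m := by simp [Nat.even_add, parity_simps]
        rw [evenProj_of_mem 𝒜 hmul, evenProj_of_mem 𝒜 b.2]
        by_cases hm : Even m
        · rw [if_pos (hpar.mpr hm), if_pos hm]
        · rw [if_neg (fun h => hm (hpar.mp h)), if_neg hm, zero_mul]
      · intro s t hs ht
        rw [add_mul, map_add, hs, ht, map_add, add_mul]
    · intro s
      rw [mul_zero, map_zero, mul_zero]
    · intro y z hy hz s
      rw [mul_add, map_add, hy s, hz s, ← mul_add]
  constructor
  · intro h
    have hNS : IsNoetherian S S := h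
    -- finite generation over Sev
    set T : Set S := ⋃ k : ℕ, ((𝒜 (2 * k + 1) : Set S)) with hT
    have hfg : (Submodule.span S T).FG := IsNoetherian.noetherian _
    obtain ⟨T', hT'T, hT'span⟩ := aux_fg_subset hfg
    have key : ∀ a : S, a ∈ Submodule.span Sev (insert (1 : S) (↑T' : Set S)) := by
      refine DirectSum.Decomposition.inductionOn 𝒜 (Submodule.zero_mem _) ?_
        (fun x y hx hy => Submodule.add_mem _ hx hy)
      intro n b
      by_cases hn : Even n
      · have hb : (b : S) ∈ Sev := hmemSev hn b.2
        have hb1 : (b : S) = (⟨(b : S), hb⟩ : Sev) • (1 : S) := by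
          rw [Submonoid.smul_def, smul_eq_mul, mul_one]
        rw [hb1]
        exact Submodule.smul_mem _ _ (Submodule.subset_span (Set.mem_insert _ _))
      · obtain ⟨k, hk⟩ := Nat.not_even_iff_odd.mp hn
        have hbT : (b : S) ∈ T := Set.mem_iUnion.mpr ⟨k, by rw [show 2 * k + 1 = n by omega]; exact b.2⟩
        have hbI : (b : S) ∈ Submodule.span S (↑T' : Set S) :=
          hT'span ▸ Submodule.subset_span hbT
        rw [Submodule.mem_span_set] at hbI
        obtain ⟨c, hsupp, hsum⟩ := hbI
        have hb_eq : (b : S) = GradedRing.proj 𝒜 n (b : S) := by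
          rw [GradedRing.proj_apply, DirectSum.decompose_of_mem_same 𝒜 b.2]
        rw [hb_eq, ← hsum, Finsupp.sum, map_sum]
        refine Submodule.sum_mem _ ?_
        intro x hxsupp
        have hxT' : x ∈ (↑T' : Set S) := hsupp (Finset.mem_coe.mpr hxsupp)
        obtain ⟨j, hj⟩ := Set.mem_iUnion.mp (hT'T hxT')
        rw [smul_eq_mul, GradedRing.proj_apply,
          DirectSum.coe_decompose_mul_of_right_mem 𝒜 n hj]
        split_ifs with hle
        · have hev : Even (n - (2 * j + 1)) := by
            rw [Nat.even_sub hle]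
            constructor
            · intro h2; exact absurd h2 hn
            · intro h2; exact absurd h2 (by simp [parity_simps])
          have hz : (DirectSum.decompose 𝒜 (c x) (n - (2 * j + 1)) : S) ∈ Sev :=
            hmemSev hev (SetLike.coe_mem _)
          have : (DirectSum.decompose 𝒜 (c x) (n - (2 * j + 1)) : S) * x
              = (⟨_, hz⟩ : Sev) • x := by
            rw [Submonoid.smul_def, smul_eq_mul]
          rw [this]
          exact Submodule.smul_mem _ _
            (Submodule.subset_span (Set.mem_insert_of_mem _ hxT'))
        · exact Submodule.zero_mem _
    have hfinS : Module.Finite Sev S := by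
      constructor
      refine ⟨insert (1 : S) T', ?_⟩
      rw [Finset.coe_insert]
      exact eq_top_iff.mpr fun a _ => key a
    refine ⟨?_, hfinS⟩
    -- Noetherianity of Sev
    rw [isNoetherianRing_iff, isNoetherian_iff]
    have hwf : WellFounded ((· > ·) : Ideal S → Ideal S → Prop) := isNoetherian_iff.mp hNS
    set f : Ideal Sev → Ideal S := fun J => Ideal.span (Subtype.val '' (J : Set Sev)) with hf
    have key2 : ∀ (J : Ideal Sev) (a : S), a ∈ f J →
        ∃ j : Sev, j ∈ J ∧ (j : S) = evenProj 𝒜 a := by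
      intro J a haJ
      have hG : evenProj 𝒜 a ∈
          AddSubgroup.map (Subring.subtype Sev).toAddMonoidHom J.toAddSubgroup := by
        rw [show (f J : Ideal S) = Submodule.span S (Subtype.val '' (J : Set Sev)) from rfl,
          Submodule.mem_span_set] at haJ
        obtain ⟨c, hsupp, hsum⟩ := haJ
        rw [← hsum, Finsupp.sum, map_sum]
        refine AddSubgroup.sum_mem _ ?_
        intro x hxsupp
        obtain ⟨j, hjJ, rfl⟩ := hsupp (Finset.mem_coe.mpr hxsupp)
        rw [smul_eq_mul, hEP_mul _ j.2 (c (j : S))]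
        refine AddSubgroup.mem_map.mpr
          ⟨(⟨evenProj 𝒜 (c (j : S)), hEP_mem _⟩ : Sev) * j, ?_, rfl⟩
        exact J.smul_mem _ hjJ
      obtain ⟨j, hj, hco⟩ := AddSubgroup.mem_map.mp hG
      exact ⟨j, hj, hco⟩
    have hstrict : ∀ J₁ J₂ : Ideal Sev, J₁ < J₂ → f J₁ < f J₂ := by
      intro J₁ J₂ hlt
      refine lt_of_le_of_ne (Ideal.span_mono (Set.image_mono hlt.le)) ?_
      intro heq
      refine hlt.ne (le_antisymm hlt.le ?_)
      intro j hj
      have hjf : (j : S) ∈ f J₁ := by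
        rw [heq]
        exact Ideal.subset_span (Set.mem_image_of_mem _ hj)
      obtain ⟨j', hj', hco⟩ := key2 J₁ (j : S) hjf
      have : (j' : S) = (j : S) := by rw [hco, hEP_id _ j.2]
      rwa [show j' = j from Subtype.ext this] at hj'
    exact Subrelation.wf (fun {J₁ J₂} h => hstrict _ _ h) (InvImage.wf f hwf)
  · rintro ⟨h1, h2⟩
    have : IsNoetherian Sev S := isNoetherian_of_isNoetherianRing_of_finite Sev S
    exact isNoetherianRing_iff.mpr (isNoetherian_of_tower Sev this)
end

section
/- Let S be a non-negatively graded commutative Noetherian ring and M a finitely generated non-negatively graded S-module. Suppose that S^0 either contains an infinite field or is a local ring with infinite residue field. Choose homogeneous elements x_1, …, x_t ∈ S of positive degrees generating S as an algebra over S^0, and set d = lcm{deg(x_1), …, deg(x_t)}. Then there exists a homogeneous element x ∈ S of degree d and an integer N such that for all n ≥ N the multiplication map M^n → M^{n+d}, m ↦ x·m, is injective. -/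
/-- A module over a ring possessing an infinite set with unit differences is not
covered by finitely many proper submodules. -/
theorem stmt2_avoid {R V : Type*} [CommRing R] [AddCommGroup V] [Module R V]
    (U : Set R) (hU : U.Infinite) (hunit : ∀ a ∈ U, ∀ b ∈ U, a ≠ b → IsUnit (a - b))
    {ι : Type*} (fs : Finset ι) (W : ι → Submodule R V) (hW : ∀ j ∈ fs, W j ≠ ⊤) :
    ∃ v : V, ∀ j ∈ fs, v ∉ W j := by
  classical
  induction fs using Finset.induction_on with
  | empty => exact ⟨0, by simp⟩
  | @insert a s ha IH =>
    obtain ⟨v, hv⟩ := IH fun j hj => hW j (Finset.mem_insert_of_mem hj)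
    by_cases hva : v ∈ W a
    · -- pick y ∉ W a
      have : ¬ ∀ u : V, u ∈ W a := by
        intro h; exact hW a (Finset.mem_insert_self a s) (Submodule.eq_top_iff'.mpr h)
      push_neg at this
      obtain ⟨y, hy⟩ := this
      by_contra hcon
      push_neg at hcon
      -- every candidate y + c • v lies in some W j with j ∈ s
      have hcand : ∀ c : R, ∃ j ∈ s, y + c • v ∈ W j := by
        intro c
        obtain ⟨j, hj, hmem⟩ := hcon (y + c • v)
        rcases Finset.mem_insert.mp hj with rfl | hjs
        · exact absurd (by simpa using (W j).sub_mem hmem ((W j).smul_mem c hva)) hy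
        · exact ⟨j, hjs, hmem⟩
      choose f hf₁ hf₂ using hcand
      have hmaps : Set.MapsTo f U (↑s : Set ι) := fun c _ => hf₁ c
      obtain ⟨c, hc, c', hc', hne, heq⟩ :=
        hU.exists_ne_map_eq_of_mapsTo hmaps s.finite_toSet
      have hmem : (c - c') • v ∈ W (f c) := by
        have h1 := hf₂ c
        have h2 := hf₂ c'
        rw [← heq] at h2
        have := (W (f c)).sub_mem h1 h2
        simpa [sub_smul] using this
      have hvj : v ∈ W (f c) := by
        obtain ⟨u, hu⟩ := hunit c hc c' hc' hne
        have := (W (f c)).smul_mem (↑u⁻¹ : R) hmem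
        rwa [← hu, smul_smul, Units.inv_mul, one_smul] at this
      exact hv (f c) (hf₁ c) hvj
    · refine ⟨v, fun j hj => ?_⟩
      rcases Finset.mem_insert.mp hj with rfl | hjs
      · exact hva
      · exact hv j hjs

/-- Avoidance of finitely many ideals by a linear combination with degree-zero
coefficients drawn from a subring `R`. -/
theorem stmt2_combo {S : Type*} [CommRing S] (R : Subring S)
    (U : Set R) (hU : U.Infinite) (hunit : ∀ a ∈ U, ∀ b ∈ U, a ≠ b → IsUnit (a - b))
    {t : ℕ} (z : Fin t → S) {ι : Type*} (fs : Finset ι) (q : ι → Ideal S)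
    (hq : ∀ j ∈ fs, ∃ i, z i ∉ q j) :
    ∃ c : Fin t → R, ∀ j ∈ fs, (∑ i, (c i : S) * z i) ∉ q j := by
  classical
  have hW : ∀ j : ι, ∃ Wj : Submodule R (Fin t → R),
      (Wj : Set (Fin t → R)) = {c | (∑ i, (c i : S) * z i) ∈ q j} := by
    intro j
    refine ⟨{ carrier := {c | (∑ i, (c i : S) * z i) ∈ q j}
              add_mem' := ?_
              zero_mem' := ?_
              smul_mem' := ?_ }, rfl⟩
    · intro c c' hc hc'
      have : (∑ i, ((c + c') i : S) * z i)
          = (∑ i, (c i : S) * z i) + (∑ i, (c' i : S) * z i) := by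
        rw [← Finset.sum_add_distrib]
        refine Finset.sum_congr rfl fun i _ => ?_
        rw [Pi.add_apply]
        push_cast
        ring
      show (∑ i, ((c + c') i : S) * z i) ∈ q j
      rw [this]
      exact Ideal.add_mem _ hc hc'
    · simp [Set.mem_setOf_eq]
    · intro a c hc
      have : (∑ i, ((a • c) i : S) * z i) = (a : S) * ∑ i, (c i : S) * z i := by
        rw [Finset.mul_sum]
        refine Finset.sum_congr rfl fun i _ => ?_
        rw [Pi.smul_apply, smul_eq_mul]
        push_cast
        ring
      show (∑ i, ((a • c) i : S) * z i) ∈ q j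
      rw [this]
      exact Ideal.mul_mem_left _ _ hc
  choose W hWcar using hW
  have hmem : ∀ j (c : Fin t → R), c ∈ W j ↔ (∑ i, (c i : S) * z i) ∈ q j := by
    intro j c
    rw [← SetLike.mem_coe, hWcar j]; rfl
  have hWne : ∀ j ∈ fs, W j ≠ ⊤ := by
    intro j hj hTop
    obtain ⟨i, hi⟩ := hq j hj
    have : (Pi.single i (1 : R) : Fin t → R) ∈ W j := hTop ▸ Submodule.mem_top
    rw [hmem] at this
    apply hi
    have hsum : (∑ k, ((Pi.single i (1 : R) : Fin t → R) k : S) * z k) = z i := by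
      rw [Finset.sum_eq_single i]
      · simp
      · intro k _ hk; simp [Pi.single_apply, hk]
      · simp
    rwa [hsum] at this
  obtain ⟨c, hc⟩ := stmt2_avoid U hU hunit fs W hWne
  exact ⟨c, fun j hj => fun hcon => hc j hj ((hmem j c).mpr hcon)⟩

/-- Existence of a prime filtration (weak form) for a finite module over a
Noetherian ring. -/
theorem stmt2_filtration (S M : Type*) [CommRing S] [AddCommGroup M] [Module S M]
    [IsNoetherianRing S] [Module.Finite S M] :
    ∃ (r : ℕ) (C : ℕ → Submodule S M) (p : ℕ → Ideal S), C 0 = ⊥ ∧ C r = ⊤ ∧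
      ∀ j < r, (p j).IsPrime ∧
        (∀ s ∈ p j, ∀ m ∈ C (j + 1), s • m ∈ C j) ∧
        (∀ s : S, ∀ m ∈ C (j + 1), s • m ∈ C j → s ∈ p j ∨ m ∈ C j) := by
  classical
  haveI : IsNoetherian S M := inferInstance
  set Ω : Set (Submodule S M) :=
    {N | ∃ (r : ℕ) (C : ℕ → Submodule S M) (p : ℕ → Ideal S), C 0 = ⊥ ∧ C r = N ∧
      ∀ j < r, (p j).IsPrime ∧
        (∀ s ∈ p j, ∀ m ∈ C (j + 1), s • m ∈ C j) ∧
        (∀ s : S, ∀ m ∈ C (j + 1), s • m ∈ C j → s ∈ p j ∨ m ∈ C j)} with hΩ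
  have hbot : (⊥ : Submodule S M) ∈ Ω :=
    ⟨0, fun _ => ⊥, fun _ => ⊥, rfl, rfl, fun j hj => absurd hj (Nat.not_lt_zero j)⟩
  obtain ⟨N, hN, hmax⟩ := set_has_maximal_iff_noetherian.mpr ‹IsNoetherian S M› Ω ⟨⊥, hbot⟩
  rcases eq_or_ne N ⊤ with rfl | hne
  · obtain ⟨r, C, p, h1, h2, h3⟩ := hN
    exact ⟨r, C, p, h1, h2, h3⟩
  · exfalso
    haveI : Nontrivial (M ⧸ N) := Submodule.Quotient.nontrivial_iff.mpr hne
    obtain ⟨P, hP⟩ := associatedPrimes.nonempty S (M ⧸ N)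
    obtain ⟨hPprime, xb, hxb⟩ := isAssociatedPrime_iff.mp hP
    obtain ⟨x, rfl⟩ := Submodule.Quotient.mk_surjective N xb
    have hPmem : ∀ s : S, s ∈ P ↔ s • Submodule.Quotient.mk (p := N) x = 0 := by
      intro s
      rw [hxb, Submodule.mem_colon_singleton, Submodule.mem_bot]
    have hxN : x ∉ N := by
      intro hx
      apply hPprime.ne_top
      rw [Ideal.eq_top_iff_one, hPmem]
      rw [one_smul, Submodule.Quotient.mk_eq_zero]
      exact hx
    set N' : Submodule S M := N ⊔ Submodule.span S {x} with hN'
    have hlt : N < N' := by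
      refine lt_of_le_of_ne le_sup_left fun h => ?_
      apply hxN
      rw [h]
      exact Submodule.mem_sup_right (Submodule.mem_span_singleton_self x)
    -- membership description of N'
    have hmemN' : ∀ m ∈ N', ∃ n ∈ N, ∃ a : S, m = n + a • x := by
      intro m hm
      rw [hN', Submodule.mem_sup] at hm
      obtain ⟨n, hn, u, hu, rfl⟩ := hm
      obtain ⟨a, rfl⟩ := Submodule.mem_span_singleton.mp hu
      exact ⟨n, hn, a, rfl⟩
    -- it belongs to Ω
    obtain ⟨r, C, p, hC0, hCr, hstep⟩ := hN
    have hN'Ω : N' ∈ Ω := by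
      refine ⟨r + 1, fun j => if j ≤ r then C j else N', fun j => if j = r then P else p j,
        by simpa using hC0, by simp, ?_⟩
      intro j hj
      rcases lt_or_eq_of_le (Nat.lt_succ_iff.mp hj) with hjr | rfl
      · have e1 : (if j ≤ r then C j else N') = C j := if_pos hjr.le
        have e2 : (if j + 1 ≤ r then C (j + 1) else N') = C (j + 1) := if_pos hjr
        have e3 : (if j = r then P else p j) = p j := if_neg hjr.ne
        dsimp only
        rw [e1, e2, e3]
        exact hstep j hjr
      · have e1 : (if j ≤ j then C j else N') = C j := if_pos le_rfl
        have e2 : (if j + 1 ≤ j then C (j + 1) else N') = N' := if_neg (by omega)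
        have e3 : (if j = j then P else p j) = P := if_pos rfl
        dsimp only
        rw [e1, e2, e3, hCr]
        refine ⟨hPprime, ?_, ?_⟩
        · intro s hs m hm
          obtain ⟨n, hn, a, rfl⟩ := hmemN' m hm
          have hsx : s • x ∈ N := by
            rw [← Submodule.Quotient.mk_eq_zero, Submodule.Quotient.mk_smul]
            exact (hPmem s).mp hs
          have : s • (n + a • x) = s • n + a • (s • x) := by
            rw [smul_add, smul_comm]
          rw [this]
          exact N.add_mem (N.smul_mem s hn) (N.smul_mem a hsx)
        · intro s m hm hsm
          obtain ⟨n, hn, a, rfl⟩ := hmemN' m hm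
          have hsax : (s * a) • x ∈ N := by
            have : (s * a) • x = s • (n + a • x) - s • n := by
              rw [smul_add, mul_smul]; abel
            rw [this]
            exact N.sub_mem hsm (N.smul_mem s hn)
          have hsaP : s * a ∈ P := by
            rw [hPmem, ← Submodule.Quotient.mk_smul, Submodule.Quotient.mk_eq_zero]
            exact hsax
          rcases hPprime.mem_or_mem hsaP with hsP | haP
          · exact Or.inl hsP
          · right
            have hax : a • x ∈ N := by
              rw [← Submodule.Quotient.mk_eq_zero, Submodule.Quotient.mk_smul]
              exact (hPmem a).mp haP
            exact N.add_mem hn hax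
    exact hmax N' hN'Ω hlt

open DirectSum

section
variable {S M : Type*} [CommRing S] [AddCommGroup M] [Module S M]
    (𝒜 : ℕ → AddSubgroup S) [GradedRing 𝒜]
    {S0 : Subring S}
    (ℳ : ℕ → Submodule S0 M) [SetLike.GradedSMul 𝒜 ℳ] [DirectSum.Decomposition ℳ]

/-- Component of `s • h` for homogeneous `h`. -/
theorem stmt2_decompose_smul_homog (s : S) {k : ℕ} {h : M} (hh : h ∈ ℳ k) (n : ℕ) :
    (DirectSum.decompose ℳ (s • h) n : M)
      = if k ≤ n then ((DirectSum.decompose 𝒜 s (n - k) : S) • h) else 0 := by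
  induction s using DirectSum.Decomposition.inductionOn 𝒜 with
  | zero =>
    simp
  | @homogeneous e s' =>
    have hmem : (s' : S) • h ∈ ℳ (e + k) := SetLike.GradedSMul.smul_mem s'.2 hh
    by_cases hn : n = e + k
    · subst hn
      rw [decompose_of_mem_same ℳ hmem, if_pos (Nat.le_add_left k e),
        Nat.add_sub_cancel, decompose_of_mem_same 𝒜 s'.2]
    · rw [decompose_of_mem_ne ℳ hmem (Ne.symm hn)]
      by_cases hkn : k ≤ n
      · rw [if_pos hkn, decompose_of_mem_ne 𝒜 s'.2 (by omega), zero_smul]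
      · rw [if_neg hkn]
  | add s₁ s₂ ih₁ ih₂ =>
    rw [add_smul, DirectSum.decompose_add, DirectSum.add_apply, Submodule.coe_add,
      ih₁, ih₂, DirectSum.decompose_add, DirectSum.add_apply, AddSubgroup.coe_add]
    split_ifs with hkn
    · rw [add_smul]
    · rw [add_zero]

/-- Component of `s • m` for homogeneous `s`. -/
theorem stmt2_decompose_homog_smul {s : S} {e : ℕ} (hs : s ∈ 𝒜 e) (m : M) (k : ℕ) :
    (DirectSum.decompose ℳ (s • m) (e + k) : M) = s • (DirectSum.decompose ℳ m k : M) := by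
  induction m using DirectSum.Decomposition.inductionOn ℳ with
  | zero => simp
  | @homogeneous j m' =>
    have hmem : s • (m' : M) ∈ ℳ (e + j) := SetLike.GradedSMul.smul_mem hs m'.2
    by_cases hk : k = j
    · subst hk
      rw [decompose_of_mem_same ℳ hmem, decompose_of_mem_same ℳ m'.2]
    · rw [decompose_of_mem_ne ℳ hmem (by omega), decompose_of_mem_ne ℳ m'.2 (Ne.symm hk),
        smul_zero]
  | add m₁ m₂ ih₁ ih₂ =>
    rw [smul_add, DirectSum.decompose_add, DirectSum.add_apply, Submodule.coe_add, ih₁, ih₂,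
      DirectSum.decompose_add, DirectSum.add_apply, Submodule.coe_add, smul_add]

end


/-- Let `S` be a non-negatively graded commutative Noetherian ring and
`M` a finitely generated non-negatively graded `S`-module (with grading `ℳ`, the pieces
being modules over the degree-zero subring `S0`).  Suppose `S⁰` contains an infinite
field, or is local with infinite residue field.  Let `x 1, …, x t` be homogeneous
elements of positive degrees generating `S` as an algebra over `S⁰` and let
`d = lcm (deg x i)`.  Then there is a homogeneous element `y` of degree `d` such that the
multiplication map `ℳ n → ℳ (n + d)`, `m ↦ y • m`, is injective for all `n ≫ 0`. -/
theorem stmt_2 {S M : Type*} [CommRing S] [AddCommGroup M] [Module S M]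
    (𝒜 : ℕ → AddSubgroup S) [GradedRing 𝒜] [IsNoetherianRing S]
    (S0 : Subring S) (hS0 : (S0 : Set S) = (𝒜 0 : Set S))
    (ℳ : ℕ → Submodule S0 M) [SetLike.GradedSMul 𝒜 ℳ] [DirectSum.Decomposition ℳ]
    [Module.Finite S M]
    (h0 : (∃ K : Subring S, (K : Set S) ⊆ (𝒜 0 : Set S) ∧ IsField K ∧ Infinite K) ∨
      (IsLocalRing S0 ∧ ∀ 𝔪 : Ideal S0, 𝔪.IsMaximal → Infinite (S0 ⧸ 𝔪)))
    {t : ℕ} (x : Fin t → S) (dx : Fin t → ℕ) (hdx : ∀ i, 0 < dx i)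
    (hxdeg : ∀ i, x i ∈ 𝒜 (dx i))
    (hgen : Subring.closure ((𝒜 0 : Set S) ∪ Set.range x) = ⊤) :
    ∃ y ∈ 𝒜 (Finset.univ.lcm dx), ∃ N : ℕ, ∀ n ≥ N,
      (∀ m ∈ ℳ n, y • m ∈ ℳ (n + Finset.univ.lcm dx)) ∧
      (∀ m₁ ∈ ℳ n, ∀ m₂ ∈ ℳ n, y • m₁ = y • m₂ → m₁ = m₂) := by
  classical
  set d := Finset.univ.lcm dx with hd_def
  have hddvd : ∀ i, dx i ∣ d := fun i => Finset.dvd_lcm (Finset.mem_univ i)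
  have hdpos : 0 < d := by
    rcases Nat.eq_zero_or_pos d with h | h
    · exfalso
      obtain ⟨i, -, hi⟩ := Finset.lcm_eq_zero_iff.mp h
      exact (hdx i).ne' hi
    · exact h
  set J : Ideal S := Ideal.span (Set.range x) with hJ_def
  have hhomel : ∀ y ∈ Set.range x, SetLike.IsHomogeneousElem 𝒜 y := by
    rintro y ⟨i, rfl⟩
    exact ⟨dx i, hxdeg i⟩
  have hJhom : J.IsHomogeneous 𝒜 := Ideal.homogeneous_span 𝒜 (Set.range x) hhomel
  -- every homogeneous element of positive degree lies in J
  have hA_le_J : ∀ n : ℕ, n ≠ 0 → ∀ s ∈ 𝒜 n, s ∈ J := by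
    have hT : ∀ s : S, ∃ a ∈ 𝒜 0, s - a ∈ J := by
      set T : Subring S :=
        { carrier := {s | ∃ a ∈ 𝒜 0, s - a ∈ J}
          zero_mem' := ⟨0, (𝒜 0).zero_mem, by simp⟩
          one_mem' := ⟨1, SetLike.one_mem_graded 𝒜, by simp⟩
          add_mem' := by
            rintro s u ⟨a, ha, hsa⟩ ⟨b, hb, hub⟩
            refine ⟨a + b, (𝒜 0).add_mem ha hb, ?_⟩
            have : s + u - (a + b) = (s - a) + (u - b) := by ring
            rw [this]
            exact J.add_mem hsa hub
          neg_mem' := by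
            rintro s ⟨a, ha, hsa⟩
            refine ⟨-a, (𝒜 0).neg_mem ha, ?_⟩
            have : -s - -a = -(s - a) := by ring
            rw [this]
            exact J.neg_mem hsa
          mul_mem' := by
            rintro s u ⟨a, ha, hsa⟩ ⟨b, hb, hub⟩
            refine ⟨a * b, by simpa using SetLike.mul_mem_graded ha hb, ?_⟩
            have : s * u - a * b = (s - a) * u + a * (u - b) := by ring
            rw [this]
            exact J.add_mem (J.mul_mem_right u hsa) (J.mul_mem_left a hub) } with hT_def
      have hsub : ((𝒜 0 : Set S) ∪ Set.range x) ⊆ (T : Set S) := by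
        rintro s (hs | ⟨i, rfl⟩)
        · exact ⟨s, hs, by simp⟩
        · exact ⟨0, (𝒜 0).zero_mem, by simpa using Ideal.subset_span (Set.mem_range_self i)⟩
      have htop : (⊤ : Subring S) ≤ T := hgen ▸ Subring.closure_le.mpr hsub
      exact fun s => htop (Subring.mem_top s)
    intro n hn s hs
    obtain ⟨a, ha, hp⟩ := hT s
    have := hJhom n hp
    rwa [DirectSum.decompose_sub, DirectSum.sub_apply, AddSubgroup.coe_sub,
      DirectSum.decompose_of_mem_same 𝒜 hs, DirectSum.decompose_of_mem_ne 𝒜 ha (Ne.symm hn),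
      sub_zero] at this
  -- homogeneous elements of large degree lie in high powers of J
  have hdeg_pow : ∀ r : ℕ, ∀ n : ℕ, r * d < n → ∀ s ∈ 𝒜 n, s ∈ J ^ (r + 1) := by
    intro r
    induction r with
    | zero =>
      intro n hn s hs
      rw [pow_one]
      exact hA_le_J n (by omega) s hs
    | succ r IH =>
      intro n hn s hs
      have hsucc : (r + 1) * d = r * d + d := by ring
      have h0n : n ≠ 0 := by omega
      have hsJ : s ∈ Submodule.span S (Set.range x) := hA_le_J n h0n s hs
      obtain ⟨c, hc⟩ := (Submodule.mem_span_range_iff_exists_fun S).mp hsJ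
      have hs' : s = (DirectSum.decompose 𝒜 s n : S) :=
        (DirectSum.decompose_of_mem_same 𝒜 hs).symm
      rw [hs', ← hc, DirectSum.decompose_sum, DFinsupp.finset_sum_apply,
        AddSubmonoidClass.coe_finset_sum]
      refine Ideal.sum_mem _ fun i _ => ?_
      have hdxd : dx i ≤ d := Nat.le_of_dvd hdpos (hddvd i)
      have hdle : dx i ≤ n := by omega
      have hn' : (n - dx i) + dx i = n := Nat.sub_add_cancel hdle
      have key := DirectSum.coe_decompose_mul_add_of_right_mem 𝒜 (hxdeg i)
        (a := c i) (i := n - dx i)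
      rw [hn'] at key
      rw [smul_eq_mul, key, pow_succ]
      refine Ideal.mul_mem_mul ?_ (Ideal.subset_span ⟨i, rfl⟩)
      exact IH (n - dx i) (by omega) _ (SetLike.coe_mem _)
  -- the filtration
  obtain ⟨r, C, p, hC0, hCr, hstep⟩ := stmt2_filtration S M
  -- candidate degree-d elements
  set z : Fin t → S := fun i => x i ^ (d / dx i) with hz_def
  have hz : ∀ i, z i ∈ 𝒜 d := by
    intro i
    have := SetLike.pow_mem_graded (d / dx i) (hxdeg i)
    rwa [smul_eq_mul, Nat.div_mul_cancel (hddvd i)] at this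
  set B : Finset ℕ := (Finset.range r).filter (fun j => ¬ J ≤ p j) with hB_def
  have hq : ∀ j ∈ B, ∃ i, z i ∉ p j := by
    intro j hj
    rw [hB_def, Finset.mem_filter, Finset.mem_range] at hj
    by_contra hcon
    push_neg at hcon
    apply hj.2
    have hx_in : ∀ i, x i ∈ p j := by
      intro i
      exact (hstep j hj.1).1.mem_of_pow_mem (d / dx i) (hcon i)
    rw [hJ_def, Ideal.span_le]
    rintro _ ⟨i, rfl⟩
    exact hx_in i
  -- choose the element y avoiding the bad primes
  obtain ⟨y, hyA, hyavoid⟩ : ∃ y, y ∈ 𝒜 d ∧ ∀ j ∈ B, y ∉ p j := by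
    rcases h0 with ⟨K, hK0, hKf, hKinf⟩ | ⟨hloc, hres⟩
    · have hU : (Set.univ : Set K).Infinite := Set.infinite_univ
      have hunit : ∀ a ∈ (Set.univ : Set K), ∀ b ∈ (Set.univ : Set K),
          a ≠ b → IsUnit (a - b) := by
        intro a _ b _ hab
        obtain ⟨u, hu⟩ := hKf.mul_inv_cancel (sub_ne_zero_of_ne hab)
        exact IsUnit.of_mul_eq_one _ hu
      obtain ⟨c, hc⟩ := stmt2_combo K Set.univ hU hunit z B p hq
      refine ⟨∑ i, (c i : S) * z i, ?_, fun j hj => hc j hj⟩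
      refine AddSubgroup.sum_mem _ fun i _ => ?_
      have h0i : ((c i : S)) ∈ 𝒜 0 := hK0 (c i).2
      simpa using SetLike.mul_mem_graded h0i (hz i)
    · haveI := hres (IsLocalRing.maximalIdeal S0) (IsLocalRing.maximalIdeal.isMaximal S0)
      set f : (S0 ⧸ IsLocalRing.maximalIdeal S0) → S0 :=
        Function.surjInv Ideal.Quotient.mk_surjective with hf_def
      have hfeq : ∀ α, Ideal.Quotient.mk (IsLocalRing.maximalIdeal S0) (f α) = α :=
        fun α => Function.surjInv_eq Ideal.Quotient.mk_surjective α
      have hfinj : Function.Injective f := by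
        intro α β h
        rw [← hfeq α, ← hfeq β, h]
      have hU : (Set.range f).Infinite := Set.infinite_range_of_injective hfinj
      have hunit : ∀ a ∈ Set.range f, ∀ b ∈ Set.range f, a ≠ b → IsUnit (a - b) := by
        rintro _ ⟨α, rfl⟩ _ ⟨β, rfl⟩ hab
        have hαβ : α ≠ β := fun h => hab (by rw [h])
        have hmk : Ideal.Quotient.mk (IsLocalRing.maximalIdeal S0) (f α - f β) ≠ 0 := by
          rw [RingHom.map_sub, hfeq, hfeq]
          exact sub_ne_zero_of_ne hαβ
        have hnm : f α - f β ∉ IsLocalRing.maximalIdeal S0 :=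
          fun hm => hmk (Ideal.Quotient.eq_zero_iff_mem.mpr hm)
        exact IsLocalRing.notMem_maximalIdeal.mp hnm
      obtain ⟨c, hc⟩ := stmt2_combo S0 (Set.range f) hU hunit z B p hq
      refine ⟨∑ i, (c i : S) * z i, ?_, fun j hj => hc j hj⟩
      refine AddSubgroup.sum_mem _ fun i _ => ?_
      have h0i : ((c i : S)) ∈ 𝒜 0 := by
        have : ((c i : S)) ∈ (S0 : Set S) := (c i).2
        rw [hS0] at this
        exact this
      simpa using SetLike.mul_mem_graded h0i (hz i)
  -- elements annihilated by y are annihilated by a power of J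
  have hkill : ∀ m : M, y • m = 0 → (J ^ (r + 1) : Ideal S) ≤ Ideal.torsionOf S M m := by
    have key : ∀ j, j ≤ r → ∀ m ∈ C j, y • m = 0 →
        (J ^ j : Ideal S) ≤ Ideal.torsionOf S M m := by
      intro j
      induction j with
      | zero =>
        intro _ m hm _
        rw [hC0, Submodule.mem_bot] at hm
        subst hm
        rw [Ideal.torsionOf_zero]
        exact le_top
      | succ j IH =>
        intro hj m hm hym
        have hjr : j < r := hj
        obtain ⟨hprime, hpa, hpb⟩ := hstep j hjr
        have h0Cj : y • m ∈ C j := by rw [hym]; exact (C j).zero_mem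
        rcases hpb y m hm h0Cj with hyp | hmC
        · have hJp : J ≤ p j := by
            by_contra hnot
            exact (hyavoid j (Finset.mem_filter.mpr ⟨Finset.mem_range.mpr hjr, hnot⟩)) hyp
          rw [pow_succ]
          refine Ideal.mul_le.mpr fun b hb a ha => ?_
          have haC : a • m ∈ C j := hpa a (hJp ha) m hm
          have hya : y • (a • m) = 0 := by rw [smul_comm, hym, smul_zero]
          have := IH hjr.le (a • m) haC hya hb
          rw [Ideal.mem_torsionOf_iff] at this ⊢
          rw [mul_smul]
          exact this
        · exact le_trans (Ideal.pow_le_pow_right j.le_succ) (IH hjr.le m hmC hym)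
    intro m hym
    refine le_trans (Ideal.pow_le_pow_right r.le_succ) (key r le_rfl m ?_ hym)
    rw [hCr]
    exact Submodule.mem_top
  -- the torsion submodule
  set T : Submodule S M :=
    { carrier := {m | (J ^ (r + 1) : Ideal S) ≤ Ideal.torsionOf S M m}
      zero_mem' := by
        simp only [Set.mem_setOf_eq, Ideal.torsionOf_zero]
        exact le_top
      add_mem' := by
        intro a b ha hb
        intro s hs
        rw [Ideal.mem_torsionOf_iff, smul_add,
          (Ideal.mem_torsionOf_iff _ _).mp (ha hs), (Ideal.mem_torsionOf_iff _ _).mp (hb hs), add_zero]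
      smul_mem' := by
        intro c m hm
        intro s hs
        rw [Ideal.mem_torsionOf_iff, smul_comm, (Ideal.mem_torsionOf_iff _ _).mp (hm hs), smul_zero] }
    with hT_def
  have hpowhom : ∀ k : ℕ, (J ^ k : Ideal S).IsHomogeneous 𝒜 := by
    intro k
    induction k with
    | zero =>
      rw [pow_zero, Ideal.one_eq_top]
      exact Ideal.IsHomogeneous.top 𝒜
    | succ k IH =>
      rw [pow_succ]
      exact IH.mul hJhom
  have hTgraded : ∀ g ∈ T, ∀ k : ℕ, (DirectSum.decompose ℳ g k : M) ∈ T := by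
    intro g hg k
    intro s hs
    rw [Ideal.mem_torsionOf_iff]
    rw [← DirectSum.sum_support_decompose 𝒜 s, Finset.sum_smul]
    refine Finset.sum_eq_zero fun e _ => ?_
    have hse : (DirectSum.decompose 𝒜 s e : S) ∈ (J ^ (r + 1) : Ideal S) := hpowhom (r + 1) e hs
    have hsg : (DirectSum.decompose 𝒜 s e : S) • g = 0 := (Ideal.mem_torsionOf_iff _ _).mp (hg hse)
    calc (DirectSum.decompose 𝒜 s e : S) • (DirectSum.decompose ℳ g k : M)
        = (DirectSum.decompose ℳ ((DirectSum.decompose 𝒜 s e : S) • g) (e + k) : M) :=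
          (stmt2_decompose_homog_smul 𝒜 ℳ (SetLike.coe_mem _) g k).symm
      _ = 0 := by rw [hsg, DirectSum.decompose_zero]; simp
  obtain ⟨G, hG⟩ := IsNoetherian.noetherian T
  set E : ℕ := G.sup (fun g => (DirectSum.decompose ℳ g).support.sup id) with hE_def
  have hsupp : ∀ g ∈ G, ∀ k, k ∈ (DirectSum.decompose ℳ g).support → k ≤ E :=
    fun g hg k hk => le_trans (Finset.le_sup (f := id) hk)
      (Finset.le_sup (f := fun g => (DirectSum.decompose ℳ g).support.sup id) hg)
  have hGT : ∀ g ∈ G, g ∈ T := fun g hg => hG ▸ Submodule.subset_span hg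
  refine ⟨y, hyA, E + r * d + 1, fun n hn => ⟨fun m hm => ?_, fun m₁ hm₁ m₂ hm₂ heq => ?_⟩⟩
  · rw [Nat.add_comm n d]
    exact SetLike.GradedSMul.smul_mem hyA hm
  · have hmℳ : m₁ - m₂ ∈ ℳ n := (ℳ n).sub_mem hm₁ hm₂
    have hym : y • (m₁ - m₂) = 0 := by rw [smul_sub, heq, sub_self]
    have hmT : m₁ - m₂ ∈ T := hkill (m₁ - m₂) hym
    have hm0 : m₁ - m₂ = 0 := by
      have hmspan : m₁ - m₂ ∈ Submodule.span S (↑G : Set M) := by rw [hG]; exact hmT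
      obtain ⟨f, -, hf⟩ := Submodule.mem_span_finset.mp hmspan
      have hdcm : (DirectSum.decompose ℳ (m₁ - m₂) n : M) = m₁ - m₂ :=
        DirectSum.decompose_of_mem_same ℳ hmℳ
      rw [← hdcm, ← hf, DirectSum.decompose_sum, DFinsupp.finset_sum_apply,
        AddSubmonoidClass.coe_finset_sum]
      refine Finset.sum_eq_zero fun g hg => ?_
      have hgsum : f g • g
          = ∑ k ∈ (DirectSum.decompose ℳ g).support, f g • (DirectSum.decompose ℳ g k : M) := by
        rw [← Finset.smul_sum, DirectSum.sum_support_decompose]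
      rw [hgsum, DirectSum.decompose_sum, DFinsupp.finset_sum_apply,
        AddSubmonoidClass.coe_finset_sum]
      refine Finset.sum_eq_zero fun k hk => ?_
      rw [stmt2_decompose_smul_homog 𝒜 ℳ (f g) (SetLike.coe_mem _) n]
      by_cases hkn : k ≤ n
      · rw [if_pos hkn]
        have hkE : k ≤ E := hsupp g hg k hk
        have hcoef : (DirectSum.decompose 𝒜 (f g) (n - k) : S) ∈ (J ^ (r + 1) : Ideal S) :=
          hdeg_pow r (n - k) (by omega) _ (SetLike.coe_mem _)
        have hgkT : (DirectSum.decompose ℳ g k : M) ∈ T := hTgraded g (hGT g hg) k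
        exact (Ideal.mem_torsionOf_iff _ _).mp (hgkT hcoef)
      · rw [if_neg hkn]
    exact sub_eq_zero.mp hm0
end

section
/- Let H be a non-negatively graded ring which is graded-commutative, and let M be a graded H-module which is Noetherian (equivalently, finitely generated, since its quotient ring will be Noetherian) as an H-module. Let a denote the annihilator ideal of M in H. Then the quotient ring H/a is a Noetherian ring. -/
open DirectSum

set_option synthInstance.maxHeartbeats 1000000
set_option maxHeartbeats 1000000

/-- If `m` is homogeneous of degree `d` and `h • m = 0`, then each homogeneous component
of `h` annihilates `m`. -/
lemma aux_component_smul_eq_zero {H M : Type*} [Ring H] [AddCommGroup M] [Module H M]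
    (𝒜 : ℕ → AddSubgroup H) [GradedRing 𝒜]
    (ℳ : ℕ → AddSubgroup M) [SetLike.GradedSMul 𝒜 ℳ] [DirectSum.Decomposition ℳ]
    (h : H) (m : M) (d : ℕ) (hm : m ∈ ℳ d) (h0 : h • m = 0) (k : ℕ) :
    (DirectSum.decompose 𝒜 h k : H) • m = 0 := by
  classical
  have hmem : ∀ j : ℕ, (DirectSum.decompose 𝒜 h j : H) • m ∈ ℳ (j +ᵥ d) := fun j =>
    SetLike.GradedSMul.smul_mem (SetLike.coe_mem _) hm
  by_cases hk : k ∈ (DirectSum.decompose 𝒜 h).support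
  · have key : (0 : ⨁ n, ℳ n) =
        ∑ j ∈ (DirectSum.decompose 𝒜 h).support,
          DirectSum.of (fun n => ℳ n) (j + d)
            ⟨(DirectSum.decompose 𝒜 h j : H) • m, hmem j⟩ := by
      calc (0 : ⨁ n, ℳ n) = DirectSum.decompose ℳ (h • m) := by
            rw [h0, DirectSum.decompose_zero]
        _ = DirectSum.decompose ℳ
            ((∑ j ∈ (DirectSum.decompose 𝒜 h).support, (DirectSum.decompose 𝒜 h j : H)) • m) := by
            rw [DirectSum.sum_support_decompose]
        _ = ∑ j ∈ (DirectSum.decompose 𝒜 h).support,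
              DirectSum.decompose ℳ ((DirectSum.decompose 𝒜 h j : H) • m) := by
            rw [Finset.sum_smul]
            exact map_sum ((DirectSum.decomposeAddEquiv ℳ).toAddMonoidHom) _ _
        _ = _ := by
            refine Finset.sum_congr rfl fun j _ => ?_
            exact DirectSum.decompose_of_mem ℳ (hmem j)
    have h2 := DFunLike.congr_fun key (k + d)
    rw [DFinsupp.finset_sum_apply, DirectSum.zero_apply] at h2
    have h4 : (∑ j ∈ (DirectSum.decompose 𝒜 h).support,
          (DirectSum.of (fun n => ℳ n) (j + d)
            ⟨(DirectSum.decompose 𝒜 h j : H) • m, hmem j⟩) (k + d)) =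
        (DirectSum.of (fun n => ℳ n) (k + d)
            ⟨(DirectSum.decompose 𝒜 h k : H) • m, hmem k⟩) (k + d) :=
      Finset.sum_eq_single_of_mem k hk fun j _ hj =>
        DirectSum.of_eq_of_ne _ _ _ (fun hc => hj (Nat.add_right_cancel hc).symm)
    rw [h4, DirectSum.of_eq_same] at h2
    have := congrArg (fun x : ℳ (k + d) => (x : M)) h2
    simpa using this.symm
  · rw [DFinsupp.notMem_support_iff] at hk
    rw [hk]
    simp

/-- Let `H` be a non-negatively graded ring which is graded-commutative,
and let `M` be a graded `H`-module which is Noetherian as an `H`-module.  Let `a` be the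
(two-sided) annihilator ideal of `M` in `H`.  Then the quotient ring `H/a` is a
Noetherian ring. -/
theorem stmt_4 {H M : Type*} [Ring H] [AddCommGroup M] [Module H M]
    (𝒜 : ℕ → AddSubgroup H) [GradedRing 𝒜]
    (hcomm : ∀ (m n : ℕ) (a b : H), a ∈ 𝒜 m → b ∈ 𝒜 n →
      a * b = (-1 : H) ^ (m * n) * (b * a))
    (ℳ : ℕ → AddSubgroup M) [SetLike.GradedSMul 𝒜 ℳ] [DirectSum.Decomposition ℳ]
    [IsNoetherian H M]
    (a : TwoSidedIdeal H) (ha : ∀ h : H, h ∈ a ↔ ∀ m : M, h • m = 0) :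
    IsNoetherianRing a.ringCon.Quotient := by
  classical
  -- finite homogeneous generating family
  obtain ⟨S, hS⟩ := IsNoetherian.noetherian (⊤ : Submodule H M)
  set N : Finset ℕ := S.sup fun s => (DirectSum.decompose ℳ s).support with hN
  set v : (S ×ˢ N : Finset (M × ℕ)) → M :=
    fun p => (DirectSum.decompose ℳ p.1.1 p.1.2 : M) with hv
  have hvmem : ∀ p : (S ×ˢ N : Finset (M × ℕ)), v p ∈ ℳ p.1.2 :=
    fun p => SetLike.coe_mem _
  have span_top : Submodule.span H (Set.range v) = ⊤ := by
    rw [eq_top_iff, ← hS, Submodule.span_le]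
    intro s hs
    rw [SetLike.mem_coe]
    have : (∑ n ∈ (DirectSum.decompose ℳ s).support, (DirectSum.decompose ℳ s n : M)) ∈
        Submodule.span H (Set.range v) := by
      refine Submodule.sum_mem _ fun n hn => Submodule.subset_span ?_
      refine ⟨⟨(s, n), Finset.mem_product.mpr ⟨hs, ?_⟩⟩, rfl⟩
      exact Finset.le_sup (f := fun s => (DirectSum.decompose ℳ s).support) hs hn
    rwa [DirectSum.sum_support_decompose ℳ s] at this
  -- the evaluation map
  set f : H →ₗ[H] ((S ×ˢ N : Finset (M × ℕ)) → M) :=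
    { toFun := fun h p => h • v p
      map_add' := fun x y => by funext p; simp [add_smul]
      map_smul' := fun c x => by funext p; simp [mul_smul] } with hf
  -- the key annihilation lemma
  have key : ∀ h : H, (∀ p, h • v p = 0) → ∀ m : M, h • m = 0 := by
    intro h hh m
    have hB : ∀ k : ℕ, ∀ m : M, (DirectSum.decompose 𝒜 h k : H) • m = 0 := by
      intro k m
      have hm : m ∈ Submodule.span H (Set.range v) := by rw [span_top]; trivial
      induction hm using Submodule.span_induction with
      | mem x hx =>
        obtain ⟨p, rfl⟩ := hx
        exact aux_component_smul_eq_zero 𝒜 ℳ h (v p) p.1.2 (hvmem p) (hh p) k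
      | zero => simp
      | add x y _ _ ihx ihy => rw [smul_add, ihx, ihy, add_zero]
      | smul s x _ ih =>
        rw [smul_smul]
        have hs : s = ∑ n ∈ (DirectSum.decompose 𝒜 s).support, (DirectSum.decompose 𝒜 s n : H) :=
          (DirectSum.sum_support_decompose 𝒜 s).symm
        calc ((DirectSum.decompose 𝒜 h k : H) * s) • x
            = (∑ n ∈ (DirectSum.decompose 𝒜 s).support,
                (DirectSum.decompose 𝒜 h k : H) * (DirectSum.decompose 𝒜 s n : H)) • x := by
              conv_lhs => rw [hs, Finset.mul_sum]
          _ = ∑ n ∈ (DirectSum.decompose 𝒜 s).support,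
                ((DirectSum.decompose 𝒜 h k : H) * (DirectSum.decompose 𝒜 s n : H)) • x := by
              rw [Finset.sum_smul]
          _ = 0 := by
              refine Finset.sum_eq_zero fun n _ => ?_
              rw [hcomm k n _ _ (SetLike.coe_mem _) (SetLike.coe_mem _)]
              rw [mul_smul, mul_smul, ih, smul_zero, smul_zero]
    conv_lhs => rw [← DirectSum.sum_support_decompose 𝒜 h, Finset.sum_smul]
    exact Finset.sum_eq_zero fun k _ => hB k m
  -- set up the quotient as an `H`-module
  letI : Module H a.ringCon.Quotient := Module.compHom _ a.ringCon.mk'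
  have hsmul : ∀ (h : H) (q : a.ringCon.Quotient), h • q = a.ringCon.mk' h * q :=
    fun _ _ => rfl
  -- the induced injective linear map from the quotient into `M ^ ι`
  set g : a.ringCon.Quotient →ₗ[H] ((S ×ˢ N : Finset (M × ℕ)) → M) :=
    { toFun := fun q => Quotient.liftOn q (fun r => f r) (by
        intro r s hrs
        have hrs' : r - s ∈ a := (a.rel_iff r s).mp hrs
        have h0 : ∀ p, (r - s) • v p = 0 := fun p => (ha _).mp hrs' (v p)
        funext p
        have := h0 p
        rw [sub_smul, sub_eq_zero] at this
        simpa [hf] using this)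
      map_add' := by
        rintro ⟨x⟩ ⟨y⟩
        show f (x + y) = f x + f y
        rw [map_add]
      map_smul' := by
        rintro c ⟨x⟩
        show f (c * x) = c • f x
        rw [← smul_eq_mul, map_smul] } with hg
  have hginj : Function.Injective g := by
    rintro ⟨x⟩ ⟨y⟩ hxy
    have hxy' : f x = f y := hxy
    refine Quotient.sound ?_
    show a.ringCon x y
    rw [a.rel_iff]
    rw [ha]
    refine key _ fun p => ?_
    have : x • v p = y • v p := congrFun hxy' p
    rw [sub_smul, this, sub_self]
  haveI : IsNoetherian H a.ringCon.Quotient := isNoetherian_of_injective g hginj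
  letI hT : IsScalarTower H a.ringCon.Quotient a.ringCon.Quotient :=
    ⟨fun h q1 q2 => by
      rw [smul_eq_mul, smul_eq_mul, hsmul, hsmul, mul_assoc]⟩
  exact isNoetherianRing_iff.mpr (@isNoetherian_of_tower H _ _ _ _ _ _ _ _ hT ‹IsNoetherian H a.ringCon.Quotient›)
end

section
/- Let S be a non-negatively graded commutative Noetherian ring and M a finitely generated non-negatively graded S-module such that each graded component M^n has finite length as an S^0-module. Then either M^n = 0 for all sufficiently large n, or there exist integers d > 0 and m_0 and an integer j with 0 ≤ j < d such that M^n ≠ 0 for every n ≥ m_0 with n ≡ j (mod d). Moreover, d may be taken to be the least common multiple of the degrees of any set of homogeneous elements of positive degree generating S as an algebra over S^0. -/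
open DirectSum

section AuxStmt6

variable {S M : Type*} [CommRing S] [AddCommGroup M] [Module S M]

/-- Projection of `s • g` for homogeneous `g`. -/
private lemma aux_proj_smul (𝒜 : ℕ → AddSubgroup S) [GradedRing 𝒜]
    (S0 : Subring S) (ℳ : ℕ → Submodule S0 M) [SetLike.GradedSMul 𝒜 ℳ]
    [DirectSum.Decomposition ℳ]
    (s : S) {e : ℕ} {g : M} (hg : g ∈ ℳ e) {n : ℕ} (hen : e ≤ n) :
    (DirectSum.decompose ℳ (s • g) n : M) = (DirectSum.decompose 𝒜 s (n - e) : S) • g := by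
  classical
  have h1 : s • g = ∑ q ∈ (DirectSum.decompose 𝒜 s).support,
      (DirectSum.decompose 𝒜 s q : S) • g := by
    rw [← Finset.sum_smul]
    conv_lhs => rw [← DirectSum.sum_support_decompose 𝒜 s]
  have h2 : ∀ q, (DirectSum.decompose ℳ ((DirectSum.decompose 𝒜 s q : S) • g) n : M)
      = if q = n - e then (DirectSum.decompose 𝒜 s q : S) • g else 0 := by
    intro q
    have hmem : (DirectSum.decompose 𝒜 s q : S) • g ∈ ℳ (q + e) := by
      have := SetLike.GradedSMul.smul_mem (SetLike.coe_mem (DirectSum.decompose 𝒜 s q)) hg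
      simpa [vadd_eq_add] using this
    by_cases hq : q = n - e
    · rw [if_pos hq]
      have he : q + e = n := by omega
      exact he ▸ DirectSum.decompose_of_mem_same ℳ hmem
    · rw [if_neg hq]
      have he : q + e ≠ n := by omega
      exact DirectSum.decompose_of_mem_ne ℳ hmem he
  rw [h1, DirectSum.decompose_sum, DFinsupp.finset_sum_apply,
    AddSubmonoidClass.coe_finset_sum]
  simp_rw [h2]
  rw [Finset.sum_ite_eq' (DirectSum.decompose 𝒜 s).support (n - e)
    (fun q => (DirectSum.decompose 𝒜 s q : S) • g)]
  by_cases hmem : n - e ∈ (DirectSum.decompose 𝒜 s).support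
  · rw [if_pos hmem]
  · rw [if_neg hmem]
    rw [DFinsupp.notMem_support_iff.mp hmem]
    simp


private lemma aux_ring (𝒜 : ℕ → AddSubgroup S) [GradedRing 𝒜]
    {t : ℕ} (x : Fin t → S) (dx : Fin t → ℕ) (hdx : ∀ i, 0 < dx i)
    (hxdeg : ∀ i, x i ∈ 𝒜 (dx i))
    (hgen : Subring.closure ((𝒜 0 : Set S) ∪ Set.range x) = ⊤)
    {d : ℕ} (hdvd : ∀ i, dx i ∣ d) (hd0 : 0 < d)
    {q : ℕ} (hq : t * d + 1 ≤ q) {a : S} (ha : a ∈ 𝒜 q) :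
    ∃ b : Fin t → S, (∀ i, b i ∈ 𝒜 (q - d)) ∧ a = ∑ i, x i ^ (d / dx i) * b i := by
  classical
  -- the subgroup of "monomials of degree p"
  set K : ℕ → AddSubgroup S := fun p => AddSubgroup.closure
    {a | ∃ c ∈ 𝒜 0, ∃ e : Fin t → ℕ, (∑ i, e i * dx i) = p ∧ a = c * ∏ i, x i ^ e i}
    with hK_def
  have hgenK : ∀ p (c : S), c ∈ 𝒜 0 → ∀ e : Fin t → ℕ, (∑ i, e i * dx i) = p →
      c * ∏ i, x i ^ e i ∈ K p := by
    intro p c hc e he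
    exact AddSubgroup.subset_closure ⟨c, hc, e, he, rfl⟩
  -- multiplicativity
  have hKmulgen : ∀ p1 p2 (u v : S),
      (∃ c ∈ 𝒜 0, ∃ e : Fin t → ℕ, (∑ i, e i * dx i) = p1 ∧ u = c * ∏ i, x i ^ e i) →
      v ∈ K p2 → u * v ∈ K (p1 + p2) := by
    intro p1 p2 u v hu' hv
    induction hv using AddSubgroup.closure_induction with
    | mem v hv' =>
      obtain ⟨c1, hc1, e1, he1, rfl⟩ := hu'
      obtain ⟨c2, hc2, e2, he2, rfl⟩ := hv'
      have : (c1 * ∏ i, x i ^ e1 i) * (c2 * ∏ i, x i ^ e2 i)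
          = (c1 * c2) * ∏ i, x i ^ (e1 i + e2 i) := by
        simp_rw [pow_add, Finset.prod_mul_distrib]; ring
      rw [this]
      apply hgenK
      · have := SetLike.mul_mem_graded hc1 hc2
        simpa using this
      · rw [← he1, ← he2, ← Finset.sum_add_distrib]
        congr 1; ext i; ring
    | zero => rw [mul_zero]; exact zero_mem _
    | add v w hv' hw' h1 h2 => rw [mul_add]; exact add_mem h1 h2
    | neg v hv' h => rw [mul_neg]; exact neg_mem h
  have hKmul : ∀ p1 p2 (u v : S), u ∈ K p1 → v ∈ K p2 → u * v ∈ K (p1 + p2) := by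
    intro p1 p2 u v hu hv
    induction hu using AddSubgroup.closure_induction with
    | mem u hu' => exact hKmulgen p1 p2 u v hu' hv
    | zero => rw [zero_mul]; exact zero_mem _
    | add u w hu' hw' h1 h2 => rw [add_mul]; exact add_mem h1 h2
    | neg u hu' h => rw [neg_mul]; exact neg_mem h
  -- every graded component of every element lies in K
  have hK : ∀ s : S, ∀ p, (DirectSum.decompose 𝒜 s p : S) ∈ K p := by
    intro s
    have hs : s ∈ Subring.closure ((𝒜 0 : Set S) ∪ Set.range x) := by
      rw [hgen]; exact Subring.mem_top s
    induction hs using Subring.closure_induction with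
    | mem z hz =>
      intro p
      rcases hz with hz | ⟨i, rfl⟩
      · by_cases hp : p = 0
        · subst hp
          rw [DirectSum.decompose_of_mem_same 𝒜 hz]
          have := hgenK 0 z hz 0 (by simp)
          simpa using this
        · rw [DirectSum.decompose_of_mem_ne 𝒜 hz (Ne.symm ?_)]
          · exact zero_mem _
          · exact hp
      · by_cases hp : p = dx i
        · subst hp
          rw [DirectSum.decompose_of_mem_same 𝒜 (hxdeg i)]
          have h1 : (1 : S) ∈ 𝒜 0 := SetLike.one_mem_graded 𝒜
          have := hgenK (dx i) 1 h1 (Pi.single i 1) ?_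
          · have heq : (1 : S) * ∏ j, x j ^ (Pi.single i 1 : Fin t → ℕ) j = x i := by
              rw [one_mul, Finset.prod_eq_single i]
              · simp
              · intro j _ hj; rw [Pi.single_eq_of_ne hj]; simp
              · intro h; exact absurd (Finset.mem_univ i) h
            rwa [heq] at this
          · rw [Finset.sum_eq_single i]
            · simp
            · intro j _ hj; rw [Pi.single_eq_of_ne hj]; simp
            · intro h; exact absurd (Finset.mem_univ i) h
        · rw [DirectSum.decompose_of_mem_ne 𝒜 (hxdeg i) (Ne.symm hp)]
          exact zero_mem _
    | zero => intro p; rw [DirectSum.decompose_zero]; simpa using zero_mem (K p)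
    | one =>
      intro p
      have h1 : (1 : S) ∈ 𝒜 0 := SetLike.one_mem_graded 𝒜
      by_cases hp : p = 0
      · subst hp
        rw [DirectSum.decompose_of_mem_same 𝒜 h1]
        have := hgenK 0 1 h1 0 (by simp)
        simpa using this
      · rw [DirectSum.decompose_of_mem_ne 𝒜 h1 (Ne.symm hp)]
        exact zero_mem _
    | add u v hu hv ihu ihv =>
      intro p
      rw [DirectSum.decompose_add]
      have : ((DirectSum.decompose 𝒜 u + DirectSum.decompose 𝒜 v) p : S)
          = (DirectSum.decompose 𝒜 u p : S) + (DirectSum.decompose 𝒜 v p : S) := rfl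
      rw [this]
      exact add_mem (ihu p) (ihv p)
    | neg u hu ihu =>
      intro p
      rw [DirectSum.decompose_neg]
      have : ((-DirectSum.decompose 𝒜 u) p : S) = -(DirectSum.decompose 𝒜 u p : S) := rfl
      rw [this]
      exact neg_mem (ihu p)
    | mul u v hu hv ihu ihv =>
      intro p
      rw [DirectSum.decompose_mul, DirectSum.coe_mul_apply]
      apply AddSubgroup.sum_mem
      intro ij hij
      have hsum : ij.1 + ij.2 = p := (Finset.mem_filter.mp hij).2
      exact hsum ▸ hKmul ij.1 ij.2 _ _ (ihu ij.1) (ihv ij.2)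
  -- the subgroup of elements with the required representation
  have hrep : ∀ u ∈ K q, ∃ b : Fin t → S, (∀ i, b i ∈ 𝒜 (q - d)) ∧
      u = ∑ i, x i ^ (d / dx i) * b i := by
    intro u hu
    let L : AddSubgroup S :=
      { carrier := {u | ∃ b : Fin t → S, (∀ i, b i ∈ 𝒜 (q - d)) ∧
          u = ∑ i, x i ^ (d / dx i) * b i}
        zero_mem' := ⟨0, fun i => zero_mem _, by simp⟩
        add_mem' := by
          rintro u v ⟨b1, hb1, rfl⟩ ⟨b2, hb2, rfl⟩
          exact ⟨b1 + b2, fun i => add_mem (hb1 i) (hb2 i), by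
            rw [← Finset.sum_add_distrib]; congr 1; ext i; simp [mul_add]⟩
        neg_mem' := by
          rintro u ⟨b, hb, rfl⟩
          exact ⟨-b, fun i => neg_mem (hb i), by
            rw [← Finset.sum_neg_distrib]; congr 1; ext i; simp⟩ }
    suffices h : K q ≤ L from h hu
    rw [hK_def]
    apply AddSubgroup.closure_le (K := L) |>.mpr
    rintro u ⟨c, hc, e, he, rfl⟩
    -- find an index i with e i ≥ d / dx i
    have hex : ∃ i, d / dx i ≤ e i := by
      by_contra hcon
      push_neg at hcon
      have hle : ∀ i : Fin t, e i * dx i ≤ d - dx i := by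
        intro i
        have h1 : e i ≤ d / dx i - 1 := by
          have := hcon i; omega
        have h2 : e i * dx i ≤ (d / dx i - 1) * dx i :=
          Nat.mul_le_mul_right _ h1
        have h3 : (d / dx i - 1) * dx i = d - dx i := by
          rw [Nat.sub_mul, Nat.div_mul_cancel (hdvd i), one_mul]
        omega
      have : (∑ i, e i * dx i) ≤ ∑ _i : Fin t, (d - 1) := by
        apply Finset.sum_le_sum
        intro i _
        have := hle i
        have := hdx i
        omega
      simp only [Finset.sum_const, Finset.card_univ, Fintype.card_fin, smul_eq_mul] at this
      have ht : t * (d - 1) ≤ t * d := Nat.mul_le_mul_left t (by omega)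
      omega
    obtain ⟨i, hi⟩ := hex
    have hdxd : dx i ≤ d := Nat.le_of_dvd hd0 (hdvd i)
    have hdi : d / dx i * dx i = d := Nat.div_mul_cancel (hdvd i)
    have heid : d ≤ e i * dx i := by
      calc d = d / dx i * dx i := hdi.symm
      _ ≤ e i * dx i := Nat.mul_le_mul_right _ hi
    set w : S := c * (x i ^ (e i - d / dx i) * ∏ j ∈ Finset.univ.erase i, x j ^ e j) with hw
    have hwmem : w ∈ 𝒜 (q - d) := by
      have h1 : x i ^ (e i - d / dx i) ∈ 𝒜 ((e i - d / dx i) • dx i) :=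
        SetLike.pow_mem_graded _ (hxdeg i)
      have h2 : (∏ j ∈ Finset.univ.erase i, x j ^ e j) ∈
          𝒜 (∑ j ∈ Finset.univ.erase i, e j • dx j) :=
        SetLike.prod_pow_mem_graded 𝒜 _ _ _ (fun j _ => hxdeg j)
      have h3 := SetLike.mul_mem_graded hc (SetLike.mul_mem_graded h1 h2)
      have h4 : (0 : ℕ) + ((e i - d / dx i) • dx i + ∑ j ∈ Finset.univ.erase i, e j • dx j)
          = q - d := by
        simp only [smul_eq_mul, zero_add]
        have h5 : (e i - d / dx i) * dx i = e i * dx i - d := by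
          rw [Nat.sub_mul, hdi]
        have h6 : e i * dx i + ∑ j ∈ Finset.univ.erase i, e j * dx j = q := by
          rw [← he]
          exact Finset.add_sum_erase Finset.univ (fun j => e j * dx j) (Finset.mem_univ i)
        omega
      exact h4 ▸ h3
    refine ⟨Function.update (0 : Fin t → S) i w, ?_, ?_⟩
    · intro j
      by_cases hj : j = i
      · subst hj; rw [Function.update_self]; exact hwmem
      · rw [Function.update_of_ne hj]; exact zero_mem _
    · rw [Finset.sum_eq_single i]
      · rw [Function.update_self, hw]
        have hpow : x i ^ e i = x i ^ (d / dx i) * x i ^ (e i - d / dx i) := by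
          rw [← pow_add]; congr 1; omega
        rw [← Finset.mul_prod_erase Finset.univ _ (Finset.mem_univ i), hpow]
        ring
      · intro j _ hj
        simp [Function.update_of_ne hj]
      · intro h; exact absurd (Finset.mem_univ i) h
  have haq : a = (DirectSum.decompose 𝒜 a q : S) :=
    (DirectSum.decompose_of_mem_same 𝒜 ha).symm
  exact haq ▸ hrep _ (hK a q)


end AuxStmt6

/-- Let `S` be a non-negatively graded commutative Noetherian ring and
`M` a finitely generated non-negatively graded `S`-module such that each graded
component `ℳ n` has finite length over the degree-zero subring `S0`.  Then either
`ℳ n = 0` for all `n ≫ 0`, or there are integers `d > 0`, `m₀` and `j` with `0 ≤ j < d`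
such that `ℳ n ≠ 0` for every `n ≥ m₀` with `n ≡ j (mod d)`; moreover `d` may be taken
to be the lcm of the degrees of any homogeneous generating set of positive degrees of
`S` over `S⁰`. -/
theorem stmt_6 {S M : Type*} [CommRing S] [AddCommGroup M] [Module S M]
    (𝒜 : ℕ → AddSubgroup S) [GradedRing 𝒜] [IsNoetherianRing S]
    (S0 : Subring S) (hS0 : (S0 : Set S) = (𝒜 0 : Set S))
    (ℳ : ℕ → Submodule S0 M) [SetLike.GradedSMul 𝒜 ℳ] [DirectSum.Decomposition ℳ]
    [Module.Finite S M]
    (hlen : ∀ n : ℕ, IsFiniteLength S0 (ℳ n))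
    {t : ℕ} (x : Fin t → S) (dx : Fin t → ℕ) (hdx : ∀ i, 0 < dx i)
    (hxdeg : ∀ i, x i ∈ 𝒜 (dx i))
    (hgen : Subring.closure ((𝒜 0 : Set S) ∪ Set.range x) = ⊤) :
    (∃ N : ℕ, ∀ n ≥ N, ℳ n = ⊥) ∨
    (0 < Finset.univ.lcm dx ∧ ∃ j < Finset.univ.lcm dx, ∃ m₀ : ℕ,
      ∀ n ≥ m₀, n % Finset.univ.lcm dx = j → ℳ n ≠ ⊥) := by
  classical
  set d := Finset.univ.lcm dx with hd_def
  have hd0 : 0 < d := by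
    rcases Nat.eq_zero_or_pos d with h | h
    · exfalso
      obtain ⟨i, -, hi⟩ := Finset.lcm_eq_zero_iff.mp (hd_def ▸ h)
      have := hdx i
      omega
    · exact h
  have hdvd : ∀ i, dx i ∣ d := fun i => Finset.dvd_lcm (Finset.mem_univ i)
  obtain ⟨G, hG⟩ := Module.Finite.fg_top (R := S) (M := M)
  set E : ℕ := G.sup (fun g => (DirectSum.decompose ℳ g).support.sup id) with hE_def
  set N : ℕ := t * d + E + 1 with hN_def
  set HS : Set M := ⋃ e ∈ Finset.range (E + 1), (ℳ e : Set M) with hHS_def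
  have hHSmem : ∀ v ∈ HS, ∃ e, e ≤ E ∧ v ∈ ℳ e := by
    intro v hv
    simp only [hHS_def, Set.mem_iUnion, Finset.mem_range] at hv
    obtain ⟨e, he, hv⟩ := hv
    exact ⟨e, by omega, hv⟩
  have hHS : Submodule.span S HS = ⊤ := by
    rw [eq_top_iff, ← hG]
    apply Submodule.span_le.mpr
    intro g hg
    have hdec : g = ∑ e ∈ (DirectSum.decompose ℳ g).support, (DirectSum.decompose ℳ g e : M) :=
      (DirectSum.sum_support_decompose ℳ g).symm
    rw [hdec]
    apply Submodule.sum_mem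
    intro e he
    apply Submodule.subset_span
    simp only [hHS_def, Set.mem_iUnion, Finset.mem_range]
    refine ⟨e, ?_, SetLike.coe_mem _⟩
    have h1 : e ≤ (DirectSum.decompose ℳ g).support.sup id := Finset.le_sup (f := id) he
    have h2 : (DirectSum.decompose ℳ g).support.sup id ≤ E :=
      Finset.le_sup (f := fun g => (DirectSum.decompose ℳ g).support.sup id) hg
    omega
  have keystep : ∀ n, N ≤ n → ℳ (n - d) = ⊥ → ℳ n = ⊥ := by
    intro n hn hbot
    rw [Submodule.eq_bot_iff]
    intro m hm
    have hmtop : (m : M) ∈ Submodule.span S HS := by rw [hHS]; exact Submodule.mem_top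
    rw [Submodule.mem_span_set] at hmtop
    obtain ⟨c, hsupp, hsum⟩ := hmtop
    have hterm : ∀ v ∈ c.support, (DirectSum.decompose ℳ (c v • v) n : M) = 0 := by
      intro v hv
      obtain ⟨e, heE, hve⟩ := hHSmem v (hsupp hv)
      have hn' : t * d + E + 1 ≤ n := hN_def ▸ hn
      have hen : e ≤ n := by
        generalize t * d = A at hn'
        omega
      rw [aux_proj_smul 𝒜 S0 ℳ (c v) hve hen]
      have hq : t * d + 1 ≤ n - e := by
        generalize t * d = A at hn' ⊢
        omega
      obtain ⟨b, hb, hbeq⟩ := aux_ring 𝒜 x dx hdx hxdeg hgen hdvd hd0 hq (SetLike.coe_mem _)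
      rw [hbeq, Finset.sum_smul]
      apply Finset.sum_eq_zero
      intro i _
      have ht1 : 0 < t := i.pos
      have hmem : b i • v ∈ ℳ (n - e - d + e) := by
        have := SetLike.GradedSMul.smul_mem (hb i) hve
        simpa [vadd_eq_add] using this
      have hidx : n - e - d + e = n - d := by
        have hdt : d ≤ t * d := Nat.le_mul_of_pos_left d ht1
        generalize t * d = A at hn' hdt
        omega
      rw [hidx, hbot] at hmem
      have hz : b i • v = 0 := by simpa using hmem
      rw [mul_smul, hz, smul_zero]
    have hm2 : m = ∑ v ∈ c.support, c v • v := by rw [← hsum]; rfl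
    have : m = ∑ v ∈ c.support, (DirectSum.decompose ℳ (c v • v) n : M) := by
      conv_lhs => rw [← DirectSum.decompose_of_mem_same ℳ hm, hm2]
      rw [DirectSum.decompose_sum, DFinsupp.finset_sum_apply, AddSubmonoidClass.coe_finset_sum]
    rw [this]
    exact Finset.sum_eq_zero hterm
  have iter : ∀ k n, N ≤ n → ℳ n = ⊥ → ℳ (n + k * d) = ⊥ := by
    intro k
    induction k with
    | zero => intro n hn hb; simpa using hb
    | succ k ih =>
      intro n hn hb
      have h1 := ih n hn hb
      have h2 : N ≤ n + (k + 1) * d := le_trans hn (Nat.le_add_right _ _)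
      have h3 : n + (k + 1) * d - d = n + k * d := by
        rw [Nat.succ_mul]
        omega
      exact keystep (n + (k + 1) * d) h2 (by rw [h3]; exact h1)
  by_cases hev : ∃ N' : ℕ, ∀ n ≥ N', ℳ n = ⊥
  · exact Or.inl hev
  · right
    refine ⟨hd0, ?_⟩
    by_contra hc
    push_neg at hc
    push_neg at hev
    set F : ℕ → ℕ := fun j => if h : j < d then (hc j h N).choose else 0 with hF_def
    have hFspec : ∀ j, j < d → N ≤ F j ∧ F j % d = j ∧ ℳ (F j) = ⊥ := by
      intro j hj
      have hs := (hc j hj N).choose_spec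
      simp only [hF_def, dif_pos hj]
      exact ⟨hs.1, hs.2.1, hs.2.2⟩
    obtain ⟨n, hn, hnne⟩ := hev ((Finset.range d).sup F + N)
    set j := n % d with hj_def
    have hj : j < d := Nat.mod_lt _ hd0
    obtain ⟨hFN, hFmod, hFbot⟩ := hFspec j hj
    have hge : F j ≤ n :=
      le_trans (Finset.le_sup (Finset.mem_range.mpr hj)) (by omega)
    have hmodeq : F j % d = n % d := by rw [hFmod]
    obtain ⟨k, hk⟩ := (Nat.modEq_iff_dvd' hge).mp hmodeq
    have hn_eq : n = F j + k * d := by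
      rw [← Nat.sub_add_cancel hge, hk]
      ring
    exact hnne (hn_eq ▸ iter k (F j) hFN hFbot)
end

section
/- Let S be a non-negatively graded commutative Noetherian ring such that S^0 either contains an infinite field or is a local ring with infinite residue field, and let M be a finitely generated non-negatively graded S-module. Then either M^n = 0 for all sufficiently large n, or there exist integers d > 0 and m_0 and an integer j with 0 ≤ j < d such that M^n ≠ 0 for every n ≥ m_0 with n ≡ j (mod d). Moreover, d may be taken to be the least common multiple of the degrees of any set of homogeneous elements of positive degree generating S as an algebra over S^0. -/
open DirectSum

section aux
set_option linter.unusedSectionVars false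

variable {S M : Type*} [CommRing S] [AddCommGroup M] [Module S M]
variable (𝒜 : ℕ → AddSubgroup S) [GradedRing 𝒜]
variable {S0 : Subring S}
variable (ℳ : ℕ → Submodule S0 M) [SetLike.GradedSMul 𝒜 ℳ] [DirectSum.Decomposition ℳ]

lemma aux_comp_homog_smul {a : S} {i : ℕ} (ha : a ∈ 𝒜 i) (w : M) (k : ℕ) :
    ((DirectSum.decompose ℳ (a • w) (i + k) : M)) = a • (DirectSum.decompose ℳ w k : M) := by
  induction w using DirectSum.Decomposition.inductionOn ℳ with
  | zero => simp
  | @homogeneous j m =>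
      have hmem : a • (m : M) ∈ ℳ (i + j) := SetLike.GradedSMul.smul_mem ha m.2
      by_cases hkj : k = j
      · subst hkj
        rw [DirectSum.decompose_of_mem_same ℳ hmem, DirectSum.decompose_of_mem_same ℳ m.2]
      · rw [DirectSum.decompose_of_mem_ne ℳ hmem (by omega : i + j ≠ i + k),
          DirectSum.decompose_of_mem_ne ℳ m.2 (Ne.symm hkj), smul_zero]
  | add w w' hw hw' =>
      rw [smul_add, DirectSum.decompose_add, DirectSum.add_apply, AddMemClass.coe_add, hw, hw',
        DirectSum.decompose_add, DirectSum.add_apply, AddMemClass.coe_add, smul_add]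

lemma aux_comp_smul_homog (r : S) {e : ℕ} {g : M} (hg : g ∈ ℳ e) (D : ℕ) :
    ((DirectSum.decompose ℳ (r • g) (D + e) : M)) = (DirectSum.decompose 𝒜 r D : S) • g := by
  classical
  conv_lhs => rw [show r • g = ∑ a ∈ (DirectSum.decompose 𝒜 r).support,
    ((DirectSum.decompose 𝒜 r a : S) • g) from by
      rw [← Finset.sum_smul, DirectSum.sum_support_decompose 𝒜 r]]
  rw [DirectSum.decompose_sum, DFinsupp.finset_sum_apply, AddSubmonoidClass.coe_finset_sum]
  have step : ∀ a ∈ (DirectSum.decompose 𝒜 r).support,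
      ((DirectSum.decompose ℳ ((DirectSum.decompose 𝒜 r a : S) • g) (D + e) : M))
        = if a = D then (DirectSum.decompose 𝒜 r D : S) • g else 0 := by
    intro a _
    have hmem : (DirectSum.decompose 𝒜 r a : S) • g ∈ ℳ (a + e) :=
      SetLike.GradedSMul.smul_mem (SetLike.coe_mem (DirectSum.decompose 𝒜 r a)) hg
    by_cases h : a = D
    · subst h; rw [if_pos rfl, DirectSum.decompose_of_mem_same ℳ hmem]
    · rw [if_neg h, DirectSum.decompose_of_mem_ne ℳ hmem (by omega : a + e ≠ D + e)]
  rw [Finset.sum_congr rfl step, Finset.sum_ite_eq' _ D]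
  by_cases h : D ∈ (DirectSum.decompose 𝒜 r).support
  · rw [if_pos h]
  · rw [if_neg h]
    have h0 : DirectSum.decompose 𝒜 r D = 0 := DFinsupp.notMem_support_iff.mp h
    rw [h0, ZeroMemClass.coe_zero, zero_smul]

lemma aux_piece_mem_span_x {t : ℕ} (x : Fin t → S) (dx : Fin t → ℕ)
    (hxdeg : ∀ i, x i ∈ 𝒜 (dx i))
    (hgen : Subring.closure ((𝒜 0 : Set S) ∪ Set.range x) = ⊤) (y : S) :
    ∀ D, 0 < D → (DirectSum.decompose 𝒜 y D : S) ∈ Ideal.span (Set.range x) := by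
  classical
  have hy : y ∈ Subring.closure ((𝒜 0 : Set S) ∪ Set.range x) := by
    rw [hgen]; trivial
  induction hy using Subring.closure_induction with
  | mem z hz =>
      intro D hD
      rcases hz with hz | ⟨i, rfl⟩
      · rw [DirectSum.decompose_of_mem_ne 𝒜 hz (by omega : (0:ℕ) ≠ D)]
        exact Ideal.zero_mem _
      · by_cases h : dx i = D
        · rw [← h, DirectSum.decompose_of_mem_same 𝒜 (hxdeg i)]
          exact Ideal.subset_span ⟨i, rfl⟩
        · rw [DirectSum.decompose_of_mem_ne 𝒜 (hxdeg i) h]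
          exact Ideal.zero_mem _
  | zero => intro D hD; simp
  | one =>
      intro D hD
      rw [DirectSum.decompose_of_mem_ne 𝒜 (SetLike.one_mem_graded 𝒜) (by omega : (0:ℕ) ≠ D)]
      exact Ideal.zero_mem _
  | add a b ha hb iha ihb =>
      intro D hD
      rw [DirectSum.decompose_add, DirectSum.add_apply, AddMemClass.coe_add]
      exact Ideal.add_mem _ (iha D hD) (ihb D hD)
  | neg a ha iha =>
      intro D hD
      rw [DirectSum.decompose_neg]
      rw [show ((-(DirectSum.decompose 𝒜 a)) D : S) = -((DirectSum.decompose 𝒜 a) D : S) from by rw [DFinsupp.neg_apply]; simp]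
      exact neg_mem (iha D hD)
  | mul a b ha hb iha ihb =>
      intro D hD
      rw [DirectSum.decompose_mul, DirectSum.coe_mul_apply]
      apply Ideal.sum_mem
      rintro ⟨i, j⟩ hij
      simp only [Finset.mem_filter] at hij
      rcases Nat.eq_zero_or_pos j with hj | hj
      · have hi : 0 < i := by omega
        exact Ideal.mul_mem_right _ _ (iha i hi)
      · exact Ideal.mul_mem_left _ _ (ihb j hj)

lemma aux_mul_x_mem {t : ℕ} (x : Fin t → S) (k : ℕ) (i : Fin t) (z : S)
    (hz : z ∈ Ideal.span {m : S | ∃ a : Fin t → ℕ, (∑ j, a j) = k ∧ m = ∏ j, x j ^ a j}) :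
    z * x i ∈ Ideal.span {m : S | ∃ a : Fin t → ℕ, (∑ j, a j) = k + 1 ∧ m = ∏ j, x j ^ a j} := by
  classical
  induction hz using Submodule.span_induction with
  | mem m hm =>
      obtain ⟨a, ha, rfl⟩ := hm
      refine Ideal.subset_span ⟨Function.update a i (a i + 1), ?_, ?_⟩
      · have e1 : ∑ j ∈ Finset.univ.erase i, (Function.update a i (a i + 1)) j
            = ∑ j ∈ Finset.univ.erase i, a j :=
          Finset.sum_congr rfl (fun j hj => by
            rw [Function.update_of_ne (Finset.ne_of_mem_erase hj)])
        rw [← Finset.add_sum_erase _ _ (Finset.mem_univ i), Function.update_self, e1]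
        rw [← Finset.add_sum_erase _ a (Finset.mem_univ i)] at ha
        omega
      · have e2 : ∏ j ∈ Finset.univ.erase i, x j ^ (Function.update a i (a i + 1)) j
            = ∏ j ∈ Finset.univ.erase i, x j ^ a j :=
          Finset.prod_congr rfl (fun j hj => by
            rw [Function.update_of_ne (Finset.ne_of_mem_erase hj)])
        rw [← Finset.mul_prod_erase Finset.univ (fun j => x j ^ (Function.update a i (a i + 1)) j)
            (Finset.mem_univ i), Function.update_self, e2,
          ← Finset.mul_prod_erase Finset.univ (fun j => x j ^ a j) (Finset.mem_univ i)]
        ring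
  | zero => rw [zero_mul]; exact Ideal.zero_mem _
  | add u v hu hv ihu ihv => rw [add_mul]; exact Ideal.add_mem _ ihu ihv
  | smul r u hu ihu =>
      rw [smul_eq_mul, mul_assoc]
      exact Ideal.mul_mem_left _ _ ihu

lemma aux_piece_mem_span_pow {t : ℕ} (x : Fin t → S) (dx : Fin t → ℕ) (hdx : ∀ i, 0 < dx i)
    (hxdeg : ∀ i, x i ∈ 𝒜 (dx i))
    (hgen : Subring.closure ((𝒜 0 : Set S) ∪ Set.range x) = ⊤) :
    ∀ (k D : ℕ), k * Finset.univ.lcm dx ≤ D → ∀ y ∈ 𝒜 D,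
      y ∈ Ideal.span {m : S | ∃ a : Fin t → ℕ, (∑ j, a j) = k ∧ m = ∏ j, x j ^ a j} := by
  classical
  have hd : 0 < Finset.univ.lcm dx := by
    rcases Nat.eq_zero_or_pos (Finset.univ.lcm dx) with h | h
    · rw [Finset.lcm_eq_zero_iff] at h
      obtain ⟨i, -, hi⟩ := h
      exact absurd hi (hdx i).ne'
    · exact h
  intro k
  induction k with
  | zero =>
      intro D _ y _
      have h1 : (1 : S) ∈ {m : S | ∃ a : Fin t → ℕ, (∑ j, a j) = 0 ∧ m = ∏ j, x j ^ a j} :=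
        ⟨0, by simp, by simp⟩
      have := Ideal.mul_mem_left _ y (Ideal.subset_span h1)
      rwa [mul_one] at this
  | succ k ih =>
      intro D hkD y hy
      have hD1 : 0 < D := lt_of_lt_of_le (by positivity) hkD
      have hyI : y ∈ Ideal.span (Set.range x) := by
        have := aux_piece_mem_span_x 𝒜 x dx hxdeg hgen y D hD1
        rwa [DirectSum.decompose_of_mem_same 𝒜 hy] at this
      obtain ⟨c, hc⟩ := Ideal.mem_span_range_iff_exists_fun.mp hyI
      have hysum : y = ∑ i, (DirectSum.decompose 𝒜 (c i * x i) D : S) := by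
        conv_lhs => rw [← DirectSum.decompose_of_mem_same 𝒜 hy, ← hc]
        rw [DirectSum.decompose_sum, DFinsupp.finset_sum_apply, AddSubmonoidClass.coe_finset_sum]
      rw [hysum]
      apply Ideal.sum_mem
      intro i _
      have hdle : dx i ≤ Finset.univ.lcm dx := Nat.le_of_dvd hd (Finset.dvd_lcm (Finset.mem_univ i))
      have hdi : dx i ≤ D := by
        calc dx i ≤ Finset.univ.lcm dx := hdle
        _ ≤ (k+1) * Finset.univ.lcm dx := Nat.le_mul_of_pos_left _ (by omega)
        _ ≤ D := hkD
      rw [DirectSum.coe_decompose_mul_of_right_mem_of_le 𝒜 (hxdeg i) hdi]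
      apply aux_mul_x_mem
      apply ih (D - dx i) ?_ _ (SetLike.coe_mem _)
      have : (k+1) * Finset.univ.lcm dx = k * Finset.univ.lcm dx + Finset.univ.lcm dx := by ring
      omega

lemma aux_piece_mem_I {t : ℕ} (x : Fin t → S) (dx : Fin t → ℕ) (hdx : ∀ i, 0 < dx i)
    (hxdeg : ∀ i, x i ∈ 𝒜 (dx i))
    (hgen : Subring.closure ((𝒜 0 : Set S) ∪ Set.range x) = ⊤)
    (D : ℕ) (hD : (t * Finset.univ.lcm dx + 1) * Finset.univ.lcm dx ≤ D)
    (y : S) (hy : y ∈ 𝒜 D) :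
    y ∈ Ideal.span (Set.range fun i => x i ^ (Finset.univ.lcm dx / dx i)) := by
  classical
  set d := Finset.univ.lcm dx with hdd
  have hmem := aux_piece_mem_span_pow 𝒜 x dx hdx hxdeg hgen (t * d + 1) D hD y hy
  refine Ideal.span_le.mpr ?_ hmem
  rintro m ⟨a, ha, rfl⟩
  have hex : ∃ i, d ≤ a i := by
    by_contra h
    push_neg at h
    have hle : ∑ j, a j ≤ ∑ _j : Fin t, (d - 1) :=
      Finset.sum_le_sum (fun j _ => by have := h j; omega)
    rw [Finset.sum_const, Finset.card_univ, Fintype.card_fin, smul_eq_mul] at hle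
    rw [ha] at hle
    have h2 : t * (d - 1) ≤ t * d := Nat.mul_le_mul_left _ (Nat.sub_le d 1)
    linarith
  obtain ⟨i, hi⟩ := hex
  have hdvd : x i ^ (d / dx i) ∣ ∏ j, x j ^ a j :=
    dvd_trans (pow_dvd_pow _ (le_trans (Nat.div_le_self d (dx i)) hi))
      (Finset.dvd_prod_of_mem (fun j => x j ^ a j) (Finset.mem_univ i))
  obtain ⟨c, hc⟩ := hdvd
  rw [hc]
  exact Ideal.mul_mem_right _ _ (Ideal.subset_span ⟨i, rfl⟩)

lemma aux_key {t : ℕ} (x : Fin t → S) (dx : Fin t → ℕ) (hdx : ∀ i, 0 < dx i)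
    (hxdeg : ∀ i, x i ∈ 𝒜 (dx i))
    (hgen : Subring.closure ((𝒜 0 : Set S) ∪ Set.range x) = ⊤)
    {ι : Type*} [Fintype ι] (g : ι → M) (deg : ι → ℕ) (hg : ∀ i, g i ∈ ℳ (deg i))
    (hspan : Submodule.span S (Set.range g) = ⊤) (n0 : ℕ) (hdeg : ∀ i, deg i ≤ n0)
    (n : ℕ) (hn : n0 + (t * Finset.univ.lcm dx + 1) * Finset.univ.lcm dx ≤ n)
    (h0n : ℳ n = ⊥) : ℳ (n + Finset.univ.lcm dx) = ⊥ := by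
  classical
  set d := Finset.univ.lcm dx with hdd
  have hddvd : ∀ j, dx j ∣ d := fun j => Finset.dvd_lcm (Finset.mem_univ j)
  have key0 : ∀ σ : S, σ ∈ Ideal.span (Set.range fun j => x j ^ (d / dx j)) →
      ∀ w : M, (DirectSum.decompose ℳ (σ • w) (n + d) : M) = 0 := by
    intro σ hσ w
    obtain ⟨c, hc⟩ := Ideal.mem_span_range_iff_exists_fun.mp hσ
    rw [← hc, Finset.sum_smul, DirectSum.decompose_sum, DFinsupp.finset_sum_apply,
      AddSubmonoidClass.coe_finset_sum]
    refine Finset.sum_eq_zero fun j _ => ?_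
    have hxe : x j ^ (d / dx j) ∈ 𝒜 d := by
      have := SetLike.pow_mem_graded (d / dx j) (hxdeg j)
      rwa [smul_eq_mul, Nat.div_mul_cancel (hddvd j)] at this
    rw [show (c j * x j ^ (d / dx j)) • w = (x j ^ (d / dx j)) • (c j • w) from by
      rw [mul_comm, mul_smul]]
    have hcomp := aux_comp_homog_smul 𝒜 ℳ hxe (c j • w) n
    rw [add_comm d n] at hcomp
    rw [hcomp]
    have hz : (DirectSum.decompose ℳ (c j • w) n : M) = 0 :=
      (Submodule.eq_bot_iff _).mp h0n _ (SetLike.coe_mem _)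
    rw [hz, smul_zero]
  rw [eq_bot_iff]
  intro u hu
  rw [Submodule.mem_bot]
  have hu' : u ∈ Submodule.span S (Set.range g) := by rw [hspan]; trivial
  obtain ⟨r, hr⟩ := (Submodule.mem_span_range_iff_exists_fun S).mp hu'
  have hU : u = ∑ i, ((DirectSum.decompose 𝒜 (r i) (n + d - deg i) : S)) • g i := by
    conv_lhs => rw [← DirectSum.decompose_of_mem_same ℳ hu, ← hr]
    rw [DirectSum.decompose_sum, DFinsupp.finset_sum_apply, AddSubmonoidClass.coe_finset_sum]
    refine Finset.sum_congr rfl fun i _ => ?_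
    have hcomp := aux_comp_smul_homog 𝒜 ℳ (r i) (hg i) (n + d - deg i)
    rw [show n + d - deg i + deg i = n + d from by have := hdeg i; omega] at hcomp
    exact hcomp
  calc u = (DirectSum.decompose ℳ u (n + d) : M) := (DirectSum.decompose_of_mem_same ℳ hu).symm
  _ = ∑ i, (DirectSum.decompose ℳ
        (((DirectSum.decompose 𝒜 (r i) (n + d - deg i) : S)) • g i) (n + d) : M) := by
      conv_lhs => rw [hU]
      rw [DirectSum.decompose_sum, DFinsupp.finset_sum_apply, AddSubmonoidClass.coe_finset_sum]
  _ = 0 := by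
      refine Finset.sum_eq_zero fun i _ => ?_
      refine key0 _ (aux_piece_mem_I 𝒜 x dx hdx hxdeg hgen _ ?_ _ (SetLike.coe_mem _)) (g i)
      have h1 := hdeg i
      set T := (t * d + 1) * d with hT
      clear_value T
      omega

end aux

/-- Let `S` be a non-negatively graded commutative Noetherian ring such
that `S⁰` either contains an infinite field or is local with infinite residue field, and
let `M` be a finitely generated non-negatively graded `S`-module.  Then either
`ℳ n = 0` for all `n ≫ 0`, or there are integers `d > 0`, `m₀` and `j` with `0 ≤ j < d`
such that `ℳ n ≠ 0` for every `n ≥ m₀` with `n ≡ j (mod d)`; moreover `d` may be taken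
to be the lcm of the degrees of any homogeneous generating set of positive degrees of
`S` over `S⁰`. -/
theorem stmt_7 {S M : Type*} [CommRing S] [AddCommGroup M] [Module S M]
    (𝒜 : ℕ → AddSubgroup S) [GradedRing 𝒜] [IsNoetherianRing S]
    (S0 : Subring S) (hS0 : (S0 : Set S) = (𝒜 0 : Set S))
    (ℳ : ℕ → Submodule S0 M) [SetLike.GradedSMul 𝒜 ℳ] [DirectSum.Decomposition ℳ]
    [Module.Finite S M]
    (h0 : (∃ K : Subring S, (K : Set S) ⊆ (𝒜 0 : Set S) ∧ IsField K ∧ Infinite K) ∨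
      (IsLocalRing S0 ∧ ∀ 𝔪 : Ideal S0, 𝔪.IsMaximal → Infinite (S0 ⧸ 𝔪)))
    {t : ℕ} (x : Fin t → S) (dx : Fin t → ℕ) (hdx : ∀ i, 0 < dx i)
    (hxdeg : ∀ i, x i ∈ 𝒜 (dx i))
    (hgen : Subring.closure ((𝒜 0 : Set S) ∪ Set.range x) = ⊤) :
    (∃ N : ℕ, ∀ n ≥ N, ℳ n = ⊥) ∨
    (0 < Finset.univ.lcm dx ∧ ∃ j < Finset.univ.lcm dx, ∃ m₀ : ℕ,
      ∀ n ≥ m₀, n % Finset.univ.lcm dx = j → ℳ n ≠ ⊥) := by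
  classical
  by_cases hleft : ∃ N : ℕ, ∀ n ≥ N, ℳ n = ⊥
  · exact Or.inl hleft
  right
  push_neg at hleft
  set d := Finset.univ.lcm dx with hdd
  have hd : 0 < d := by
    rcases Nat.eq_zero_or_pos d with h | h
    · rw [hdd, Finset.lcm_eq_zero_iff] at h
      obtain ⟨i, -, hi⟩ := h
      exact absurd hi (hdx i).ne'
    · exact h
  refine ⟨hd, ?_⟩
  -- homogeneous generators
  obtain ⟨Y, hY⟩ := Module.Finite.fg_top (R := S) (M := M)
  set n0 : ℕ := Y.sup (fun y => (DirectSum.decompose ℳ y).support.sup id) with hn0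
  set ι := {y : M // y ∈ Y} × Fin (n0 + 1) with hι
  set g : ι → M := fun p => (DirectSum.decompose ℳ p.1.1 (p.2 : ℕ) : M) with hgdef
  set deg : ι → ℕ := fun p => (p.2 : ℕ) with hdegdef
  have hg : ∀ i : ι, g i ∈ ℳ (deg i) := fun p => SetLike.coe_mem _
  have hdeg : ∀ i : ι, deg i ≤ n0 := fun p => by
    have := p.2.2; simp only [hdegdef]; omega
  have hspan : Submodule.span S (Set.range g) = ⊤ := by
    rw [eq_top_iff, ← hY]
    refine Submodule.span_le.mpr ?_
    intro y hy
    have hrepr : ∑ k ∈ Finset.range (n0 + 1), (DirectSum.decompose ℳ y k : M) = y := by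
      conv_rhs => rw [← DirectSum.sum_support_decompose ℳ y]
      refine (Finset.sum_subset ?_ ?_).symm
      · intro k hk
        rw [Finset.mem_range]
        have : k ≤ (DirectSum.decompose ℳ y).support.sup id :=
          Finset.le_sup (f := id) hk
        have h2 : (DirectSum.decompose ℳ y).support.sup id ≤ n0 :=
          Finset.le_sup (f := fun y => (DirectSum.decompose ℳ y).support.sup id) hy
        omega
      · intro k _ hk
        rw [DFinsupp.notMem_support_iff.mp hk, ZeroMemClass.coe_zero]
    rw [← hrepr]
    apply Submodule.sum_mem
    intro k hk
    apply Submodule.subset_span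
    exact ⟨(⟨y, hy⟩, ⟨k, Finset.mem_range.mp hk⟩), rfl⟩
  set m₀ : ℕ := n0 + (t * d + 1) * d with hm₀
  have key : ∀ n, m₀ ≤ n → ℳ n = ⊥ → ℳ (n + d) = ⊥ := fun n hn h0n =>
    aux_key 𝒜 ℳ x dx hdx hxdeg hgen g deg hg hspan n0 hdeg n hn h0n
  -- find the residue class
  have hj : ∃ j, j < d ∧ ∀ N, ∃ n, N ≤ n ∧ n % d = j ∧ ℳ n ≠ ⊥ := by
    by_contra hcon
    push_neg at hcon
    have hcon' : ∀ j : ℕ, ∃ N, ∀ n, N ≤ n → n % d = j → ℳ n = ⊥ := by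
      intro j
      by_cases hjd : j < d
      · exact hcon j hjd
      · exact ⟨0, fun n _ hn => absurd hn (by have := Nat.mod_lt n hd; omega)⟩
    choose N hN using hcon'
    obtain ⟨n, hn, hne⟩ := hleft ((Finset.range d).sup N)
    refine hne (hN (n % d) n ?_ rfl)
    calc N (n % d) ≤ (Finset.range d).sup N :=
      Finset.le_sup (Finset.mem_range.mpr (Nat.mod_lt n hd))
    _ ≤ n := hn
  obtain ⟨j, hjd, hjinf⟩ := hj
  refine ⟨j, hjd, m₀, ?_⟩
  intro n hn hnj hbot
  have hall : ∀ k : ℕ, ℳ (n + k * d) = ⊥ := by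
    intro k
    induction k with
    | zero => simpa using hbot
    | succ k ih =>
        have := key (n + k * d) (le_trans hn (Nat.le_add_right _ _)) ih
        rwa [show n + k * d + d = n + (k + 1) * d from by ring] at this
  obtain ⟨n', hn'le, hn'j, hne⟩ := hjinf n
  obtain ⟨k, hk⟩ := (Nat.modEq_iff_dvd' hn'le).mp (show n % d = n' % d from hnj.trans hn'j.symm)
  have heq : n' = n + k * d := by rw [mul_comm]; omega
  rw [heq] at hne
  exact hne (hall k)
end
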